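/- arXiv:2502.16019 — 8 statements merged into one kernel-verified Lean document; each statement's English description precedes it below -/
import Mathlib

section
/- Let f and g be non-decreasing real-valued functions on {0,1,2,...} with -f(0) < g(0). Let (M_n)_{n ≥ 0} be a supermartingale bounded below by M_n ≥ -f(n) for all n ≥ 0, with initial expectation E[M_0] ∈ [-f(0), g(0)]. Then P(∃ n ≥ 0 : M_n ≥ g(n)) ≤ 1 - ((g(0) - E[M_0])/(g(0) + f(0))) · ∏_{n=1}^∞ (g(n) + f(n-1))/(g(n) + f(n)). -/
open MeasureTheory Filter Topology

/-- **Generalised Ville's inequality** (Theorem 2(a)): a supermartingale `M`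
bounded below by the non-increasing curve `-f` crosses the non-decreasing
threshold curve `g` with probability at most
`1 - ((g 0 - E[M 0])/(g 0 + f 0)) · ∏_{n≥1} (g n + f (n-1))/(g n + f n)`. -/
theorem generalised_villes_inequality {Ω : Type*} {mΩ : MeasurableSpace Ω}
    {μ : Measure Ω} [IsProbabilityMeasure μ] {𝒢 : Filtration ℕ mΩ}
    {M : ℕ → Ω → ℝ} {f g : ℕ → ℝ}
    (hf : Monotone f) (hg : Monotone g) (h0 : -f 0 < g 0)
    (hM : Supermartingale M 𝒢 μ)
    (hlb : ∀ n, ∀ᵐ ω ∂μ, -f n ≤ M n ω)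
    (hinit : (∫ ω, M 0 ω ∂μ) ∈ Set.Icc (-f 0) (g 0)) :
    (μ {ω | ∃ n, g n ≤ M n ω}).toReal ≤
      1 - ((g 0 - ∫ ω, M 0 ω ∂μ) / (g 0 + f 0)) *
        ∏' n : ℕ, ((g (n + 1) + f n) / (g (n + 1) + f (n + 1))) := by
  classical
  have hq : ∀ n, 0 < g n + f n := by
    intro n
    have h1 : g 0 ≤ g n := hg (Nat.zero_le n)
    have h2 : f 0 ≤ f n := hf (Nat.zero_le n)
    linarith
  have hq' : ∀ n, 0 < g (n + 1) + f n := by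
    intro n
    have h1 := hq n
    have h2 : g n ≤ g (n + 1) := hg (Nat.le_succ n)
    linarith
  set I := ∫ ω, M 0 ω ∂μ with hI
  set s := (g 0 - I) / (g 0 + f 0) with hs
  have hs0 : 0 ≤ s := div_nonneg (by linarith [hinit.2]) (le_of_lt (hq 0))
  set r : ℕ → ℝ := fun n => (g (n + 1) + f n) / (g (n + 1) + f (n + 1)) with hrdef
  have hr0 : ∀ n, 0 < r n := fun n => div_pos (hq' n) (hq (n + 1))
  have hr1 : ∀ n, r n ≤ 1 := by
    intro n
    rw [hrdef]
    rw [div_le_one (hq (n + 1))]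
    have := hf (Nat.le_succ n); linarith
  -- the "no crossing up to time n" sets
  set A : ℕ → Set Ω := fun n => {ω | ∀ k ≤ n, M k ω < g k} with hA
  have hAm : ∀ n, MeasurableSet[𝒢 n] (A n) := by
    intro n
    have hAe : A n = ⋂ k ∈ Set.Iic n, {ω | M k ω < g k} := by
      ext ω; simp [hA]
    rw [hAe]
    refine MeasurableSet.biInter (Set.to_countable _) ?_
    intro k hk
    exact 𝒢.mono hk _ (measurableSet_lt ((hM.stronglyAdapted k).measurable) measurable_const)
  have hAm' : ∀ n, MeasurableSet (A n) := fun n => 𝒢.le n _ (hAm n)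
  have hAanti : Antitone A := by
    intro m n hmn ω hω k hk
    exact hω k (hk.trans hmn)
  have hint : ∀ n, Integrable (M n) μ := fun n => hM.integrable n
  set W : ℕ → ℝ := fun n => ∫ ω in A n, (g n - M n ω) ∂μ with hW
  have hWeq : ∀ n, W n = g n * (μ (A n)).toReal - ∫ ω in A n, M n ω ∂μ := by
    intro n
    have hWn : W n = ∫ ω in A n, (g n - M n ω) ∂μ := rfl
    rw [hWn, integral_sub (integrable_const _) ((hint n).integrableOn), setIntegral_const]
    simp [smul_eq_mul, mul_comm, measureReal_def]
  have hWle : ∀ n, W n ≤ (g n + f n) * (μ (A n)).toReal := by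
    intro n
    have hb : (fun ω => g n - M n ω) ≤ᵐ[μ.restrict (A n)] (fun _ => g n + f n) := by
      filter_upwards [ae_restrict_of_ae (hlb n)] with ω hω
      show g n - M n ω ≤ g n + f n
      linarith
    calc W n ≤ ∫ _ω in A n, (g n + f n) ∂μ :=
          integral_mono_ae ((integrable_const _).sub ((hint n).integrableOn))
            (integrable_const _) hb
      _ = (g n + f n) * (μ (A n)).toReal := by
          rw [setIntegral_const]; simp [smul_eq_mul, mul_comm, measureReal_def]
  have hW0 : g 0 - I ≤ W 0 := by
    have hsplit : ∫ ω in A 0, (g 0 - M 0 ω) ∂μ + ∫ ω in (A 0)ᶜ, (g 0 - M 0 ω) ∂μ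
        = ∫ ω, (g 0 - M 0 ω) ∂μ :=
      integral_add_compl (hAm' 0) ((integrable_const _).sub (hint 0))
    have hneg : ∫ ω in (A 0)ᶜ, (g 0 - M 0 ω) ∂μ ≤ 0 := by
      apply integral_nonpos_of_ae
      rw [EventuallyLE, ae_restrict_iff' (hAm' 0).compl]
      apply Eventually.of_forall
      intro ω hω
      simp only [hA, Set.mem_compl_iff, Set.mem_setOf_eq] at hω
      push_neg at hω
      obtain ⟨k, hk, hgk⟩ := hω
      have hk0 : k = 0 := Nat.le_zero.mp hk
      subst hk0
      simp only [Pi.zero_apply]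
      linarith
    have htot : ∫ ω, (g 0 - M 0 ω) ∂μ = g 0 - I := by
      rw [integral_sub (integrable_const _) (hint 0), integral_const]
      simp [hI]
    have := hWeq 0
    have hW0' : W 0 = ∫ ω in A 0, (g 0 - M 0 ω) ∂μ := by rw [hW]
    linarith [hW0' ▸ (by linarith [hsplit, hneg, htot] :
      g 0 - I ≤ ∫ ω in A 0, (g 0 - M 0 ω) ∂μ)]
  have hstep : ∀ n, W n * ((g (n + 1) + f n) / (g n + f n)) ≤ W (n + 1) := by
    intro n
    have hsub : A (n + 1) ⊆ A n := hAanti (Nat.le_succ n)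
    have hdecomp : ∫ ω in A n ∩ A (n + 1), (g (n + 1) - M (n + 1) ω) ∂μ
        + ∫ ω in A n \ A (n + 1), (g (n + 1) - M (n + 1) ω) ∂μ
        = ∫ ω in A n, (g (n + 1) - M (n + 1) ω) ∂μ :=
      integral_inter_add_diff (hAm' (n + 1))
        ((integrable_const _).sub (hint (n + 1))).integrableOn
    have hcap : A n ∩ A (n + 1) = A (n + 1) := Set.inter_eq_self_of_subset_right hsub
    have hdiffneg : ∫ ω in A n \ A (n + 1), (g (n + 1) - M (n + 1) ω) ∂μ ≤ 0 := by
      apply integral_nonpos_of_ae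
      rw [EventuallyLE, ae_restrict_iff' ((hAm' n).diff (hAm' (n + 1)))]
      apply Eventually.of_forall
      rintro ω ⟨hω1, hω2⟩
      simp only [hA, Set.mem_setOf_eq] at hω1 hω2
      push_neg at hω2
      obtain ⟨k, hk, hgk⟩ := hω2
      have hkn : k = n + 1 := by
        rcases Nat.lt_succ_iff_lt_or_eq.mp (Nat.lt_succ_of_le hk) with h | h
        · exact absurd hgk (not_le.mpr (hω1 k (Nat.lt_succ_iff.mp h)))
        · exact h
      subst hkn
      simp only [Pi.zero_apply]
      linarith
    have hWn1 : ∫ ω in A n, (g (n + 1) - M (n + 1) ω) ∂μ ≤ W (n + 1) := by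
      have hW1 : W (n + 1) = ∫ ω in A (n + 1), (g (n + 1) - M (n + 1) ω) ∂μ := by rw [hW]
      rw [hW1]
      rw [← hdecomp, hcap]
      linarith
    have hsm : ∫ ω in A n, M (n + 1) ω ∂μ ≤ ∫ ω in A n, M n ω ∂μ :=
      hM.setIntegral_le (Nat.le_succ n) (hAm n)
    have h2 : g (n + 1) * (μ (A n)).toReal - ∫ ω in A n, M n ω ∂μ
        ≤ ∫ ω in A n, (g (n + 1) - M (n + 1) ω) ∂μ := by
      rw [integral_sub (integrable_const _) ((hint (n + 1)).integrableOn), setIntegral_const]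
      simp only [smul_eq_mul, measureReal_def]
      linarith [hsm]
    have h3 : W n + (g (n + 1) - g n) * (μ (A n)).toReal ≤ W (n + 1) := by
      have he : g (n + 1) * (μ (A n)).toReal - ∫ ω in A n, M n ω ∂μ
          = (g n * (μ (A n)).toReal - ∫ ω in A n, M n ω ∂μ)
            + (g (n + 1) - g n) * (μ (A n)).toReal := by ring
      have := hWeq n
      linarith [hWn1, h2]
    have hd : 0 ≤ g (n + 1) - g n := sub_nonneg.2 (hg (Nat.le_succ n))
    have hfrac : W n / (g n + f n) ≤ (μ (A n)).toReal :=
      (div_le_iff₀ (hq n)).2 (by linarith [hWle n])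
    have heq : W n * ((g (n + 1) + f n) / (g n + f n))
        = W n + (g (n + 1) - g n) * (W n / (g n + f n)) := by
      field_simp [(hq n).ne']
      ring
    rw [heq]
    have hmul := mul_le_mul_of_nonneg_left hfrac hd
    linarith [h3]
  set p : ℕ → ℝ := fun n => ∏ k ∈ Finset.range n, r k with hp
  have hkey : ∀ n, s * p n * (g n + f n) ≤ W n := by
    intro n
    induction n with
    | zero =>
      have hp0 : p 0 = 1 := by simp [hp]
      have hse : s * (g 0 + f 0) = g 0 - I := by
        rw [hs]; field_simp [(hq 0).ne']
      rw [hp0]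
      linarith [hW0]
    | succ n ih =>
      have hratio : 0 ≤ (g (n + 1) + f n) / (g n + f n) := le_of_lt (div_pos (hq' n) (hq n))
      have h1 := mul_le_mul_of_nonneg_right ih hratio
      have h2 := hstep n
      have heq : s * p n * (g n + f n) * ((g (n + 1) + f n) / (g n + f n))
          = s * p (n + 1) * (g (n + 1) + f (n + 1)) := by
        have hpe : p (n + 1) = p n * r n := by
          rw [hp]; simp only; rw [Finset.prod_range_succ]
        rw [hpe, hrdef]
        field_simp [(hq n).ne', (hq (n + 1)).ne']
      linarith [heq ▸ h1]
  have hmeasle : ∀ n, s * p n ≤ (μ (A n)).toReal := by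
    intro n
    refine le_of_mul_le_mul_right ?_ (hq n)
    calc s * p n * (g n + f n) ≤ W n := hkey n
      _ ≤ (g n + f n) * (μ (A n)).toReal := hWle n
      _ = (μ (A n)).toReal * (g n + f n) := mul_comm _ _
  -- the infinite product
  have hprod_anti : Antitone (fun F : Finset ℕ => ∏ k ∈ F, r k) := by
    intro F F' hFF'
    show ∏ k ∈ F', r k ≤ ∏ k ∈ F, r k
    rw [← Finset.prod_sdiff hFF']
    exact mul_le_of_le_one_left (Finset.prod_nonneg fun i _ => (hr0 i).le)
      (Finset.prod_le_one (fun i _ => (hr0 i).le) (fun i _ => hr1 i))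
  have hbdd : BddBelow (Set.range fun F : Finset ℕ => ∏ k ∈ F, r k) := by
    refine ⟨0, ?_⟩
    rintro x ⟨F, rfl⟩
    exact Finset.prod_nonneg fun i _ => (hr0 i).le
  have hHasProd : HasProd r (⨅ F : Finset ℕ, ∏ k ∈ F, r k) :=
    tendsto_atTop_ciInf hprod_anti hbdd
  have htle : ∀ n, (∏' k, r k) ≤ p n := by
    intro n
    rw [hHasProd.tprod_eq]
    exact ciInf_le hbdd (Finset.range n)
  -- limit set
  set B : Set Ω := ⋂ n, {ω | M n ω < g n} with hB
  have hBm : MeasurableSet B :=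
    MeasurableSet.iInter fun n =>
      𝒢.le n _ (measurableSet_lt ((hM.stronglyAdapted n).measurable) measurable_const)
  have hBeq : B = ⋂ n, A n := by
    ext ω
    simp only [hB, hA, Set.mem_iInter, Set.mem_setOf_eq]
    constructor
    · intro h n k _; exact h k
    · intro h n; exact h n n le_rfl
  have htend : Tendsto (fun n => μ (A n)) atTop (𝓝 (μ (⋂ n, A n))) :=
    tendsto_measure_iInter_atTop (fun n => (hAm' n).nullMeasurableSet) hAanti
      ⟨0, measure_ne_top _ _⟩
  have htendR : Tendsto (fun n => (μ (A n)).toReal) atTop (𝓝 ((μ (⋂ n, A n)).toReal)) :=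
    (ENNReal.tendsto_toReal (measure_ne_top _ _)).comp htend
  have hlim : s * ∏' k, r k ≤ (μ B).toReal := by
    rw [hBeq]
    refine ge_of_tendsto htendR (Eventually.of_forall fun n => ?_)
    calc s * ∏' k, r k ≤ s * p n := mul_le_mul_of_nonneg_left (htle n) hs0
      _ ≤ _ := hmeasle n
  have hSeq : {ω | ∃ n, g n ≤ M n ω} = Bᶜ := by
    ext ω
    simp [hB, not_forall, not_lt]
  rw [hSeq, measure_compl hBm (measure_ne_top _ _), measure_univ,
    ENNReal.toReal_sub_of_le prob_le_one ENNReal.one_ne_top, ENNReal.toReal_one]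
  linarith [hlim]
end

section
/- Let f and g be non-decreasing real-valued functions on {0,1,2,...} with -f(0) < g(0). For any m ∈ [-f(0), g(0)] there exists a filtered probability space and a martingale (M_n)_{n ≥ 0} on it with M_n ≥ -f(n) for all n ≥ 0 and E[M_0] = m, such that P(∃ n ≥ 0 : M_n ≥ g(n)) = 1 - ((g(0) - m)/(g(0) + f(0))) · ∏_{n=1}^∞ (g(n) + f(n-1))/(g(n) + f(n)). -/
open MeasureTheory Filter Finset Topology

namespace VilleTightAux

instance : MeasurableSpace (Option ℕ) := ⊤
instance : MeasurableSingletonClass (Option ℕ) := ⟨fun _ => trivial⟩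

lemma mset (s : Set (Option ℕ)) : MeasurableSet s := trivial

variable (f g : ℕ → ℝ) (m : ℝ)

noncomputable def aseq (n : ℕ) : ℝ := (g (n+1) + f n) / (g (n+1) + f (n+1))

noncomputable def rseq : ℕ → ℝ
  | 0 => (g 0 - m) / (g 0 + f 0)
  | n+1 => rseq n * aseq f g n

noncomputable def LL : ℝ := ∏' n, aseq f g n

noncomputable def vv : Option ℕ → ℝ
  | none => (g 0 - m) / (g 0 + f 0) * LL f g
  | some 0 => 1 - rseq f g m 0
  | some (n+1) => rseq f g m n - rseq f g m (n+1)

section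
variable (hf : Monotone f) (hg : Monotone g) (h0 : -f 0 < g 0) (hm1 : -f 0 ≤ m) (hm2 : m ≤ g 0)
include hf hg h0

lemma hD (n : ℕ) : 0 < g n + f n := by
  have h1 := hf (Nat.zero_le n); have h2 := hg (Nat.zero_le n); linarith

lemma hgf (n : ℕ) : 0 < g (n+1) + f n := by
  have h1 := hf (Nat.zero_le n); have h2 := hg (Nat.zero_le (n+1)); linarith

lemma ha_pos (n : ℕ) : 0 < aseq f g n := div_pos (hgf f g hf hg h0 n) (hD f g hf hg h0 (n+1))

lemma ha_le1 (n : ℕ) : aseq f g n ≤ 1 := by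
  rw [aseq, div_le_one (hD f g hf hg h0 (n+1))]
  have := hf (Nat.le_succ n); linarith

include hm2 in
lemma hc_nonneg : 0 ≤ (g 0 - m) / (g 0 + f 0) :=
  div_nonneg (by linarith) (hD f g hf hg h0 0).le

include hm1 in
lemma hc_le1 : (g 0 - m) / (g 0 + f 0) ≤ 1 := by
  rw [div_le_one (hD f g hf hg h0 0)]; linarith

include hm2 in
lemma hr_nonneg (n : ℕ) : 0 ≤ rseq f g m n := by
  induction n with
  | zero => exact hc_nonneg f g m hf hg h0 hm2
  | succ n ih => exact mul_nonneg ih (ha_pos f g hf hg h0 n).le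

include hm2 in
lemma hr_anti (n : ℕ) : rseq f g m (n+1) ≤ rseq f g m n := by
  calc rseq f g m n * aseq f g n ≤ rseq f g m n * 1 :=
        mul_le_mul_of_nonneg_left (ha_le1 f g hf hg h0 n) (hr_nonneg f g m hf hg h0 hm2 n)
    _ = rseq f g m n := mul_one _

include hm1 hm2 in
lemma hr_le1 (n : ℕ) : rseq f g m n ≤ 1 := by
  induction n with
  | zero => exact hc_le1 f g m hf hg h0 hm1
  | succ n ih => exact le_trans (hr_anti f g m hf hg h0 hm2 n) ih

omit hf hg h0 in
lemma hr_eq (n : ℕ) :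
    rseq f g m n = (g 0 - m) / (g 0 + f 0) * ∏ k ∈ range n, aseq f g k := by
  induction n with
  | zero => simp [rseq]
  | succ n ih => rw [rseq, ih, prod_range_succ, mul_assoc]

lemma hprod : HasProd (aseq f g) (⨅ s : Finset ℕ, ∏ i ∈ s, aseq f g i) := by
  apply tendsto_atTop_ciInf
  · intro s t hst
    calc ∏ i ∈ t, aseq f g i = (∏ i ∈ t \ s, aseq f g i) * ∏ i ∈ s, aseq f g i :=
          (Finset.prod_sdiff hst).symm
      _ ≤ 1 * ∏ i ∈ s, aseq f g i := by
          apply mul_le_mul_of_nonneg_right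
          · exact Finset.prod_le_one (fun i _ => (ha_pos f g hf hg h0 i).le)
              (fun i _ => ha_le1 f g hf hg h0 i)
          · exact Finset.prod_nonneg fun i _ => (ha_pos f g hf hg h0 i).le
      _ = ∏ i ∈ s, aseq f g i := one_mul _
  · exact ⟨0, by rintro x ⟨s, rfl⟩; exact Finset.prod_nonneg fun i _ => (ha_pos f g hf hg h0 i).le⟩

lemma hL : HasProd (aseq f g) (LL f g) := by
  have h := hprod f g hf hg h0
  rwa [LL, h.tprod_eq]

lemma hL_nonneg : 0 ≤ LL f g := by
  rw [LL, (hprod f g hf hg h0).tprod_eq]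
  exact le_ciInf fun s => Finset.prod_nonneg fun i _ => (ha_pos f g hf hg h0 i).le

lemma hL_le1 : LL f g ≤ 1 := by
  rw [LL, (hprod f g hf hg h0).tprod_eq]
  have hbdd : BddBelow (Set.range fun s : Finset ℕ => ∏ i ∈ s, aseq f g i) := by
    refine ⟨0, ?_⟩
    rintro x ⟨s, rfl⟩
    exact Finset.prod_nonneg fun i _ => (ha_pos f g hf hg h0 i).le
  exact ciInf_le_of_le hbdd ∅ (by simp)

lemma hr_tendsto :
    Tendsto (rseq f g m) atTop (𝓝 ((g 0 - m) / (g 0 + f 0) * LL f g)) := by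
  have h := ((hL f g hf hg h0).tendsto_prod_nat).const_mul ((g 0 - m) / (g 0 + f 0))
  have : (fun n => (g 0 - m) / (g 0 + f 0) * ∏ i ∈ range n, aseq f g i) = rseq f g m := by
    funext n; exact (hr_eq f g m n).symm
  rwa [this] at h

include hm1 hm2 in
lemma hv_nonneg (x : Option ℕ) : 0 ≤ vv f g m x := by
  match x with
  | none => exact mul_nonneg (hc_nonneg f g m hf hg h0 hm2) (hL_nonneg f g hf hg h0)
  | some 0 =>
      have := hc_le1 f g m hf hg h0 hm1
      simp only [vv, rseq]; linarith
  | some (n+1) =>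
      have := hr_anti f g m hf hg h0 hm2 n
      simp only [vv]; linarith

omit hf hg h0 in
lemma hpartial (n : ℕ) : ∑ t ∈ range (n+1), vv f g m (some t) = 1 - rseq f g m n := by
  induction n with
  | zero => simp [vv]
  | succ n ih => rw [Finset.sum_range_succ, ih]; simp only [vv]; ring

include hm1 hm2 in
lemma hsum_some :
    HasSum (fun n => vv f g m (some n)) (1 - (g 0 - m) / (g 0 + f 0) * LL f g) := by
  rw [hasSum_iff_tendsto_nat_of_nonneg (fun i => hv_nonneg f g m hf hg h0 hm1 hm2 (some i))]
  rw [← tendsto_add_atTop_iff_nat 1]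
  have : (fun n => ∑ i ∈ range (n+1), vv f g m (some i)) = fun n => 1 - rseq f g m n := by
    funext n; exact hpartial f g m n
  rw [this]
  exact tendsto_const_nhds.sub (hr_tendsto f g m hf hg h0)

include hm1 hm2 in
lemma hsum_v : HasSum (vv f g m) 1 := by
  have h1 : HasSum (fun x : Option ℕ => Option.elim x 0 (fun t => vv f g m (some t)))
      (1 - (g 0 - m) / (g 0 + f 0) * LL f g) := by
    rw [← (Option.some_injective ℕ).hasSum_iff ?_]
    · exact hsum_some f g m hf hg h0 hm1 hm2
    · rintro (_ | t) hx
      · rfl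
      · exact absurd ⟨t, rfl⟩ hx
  have h2 : HasSum (fun x : Option ℕ => if x = none then (g 0 - m) / (g 0 + f 0) * LL f g else 0)
      ((g 0 - m) / (g 0 + f 0) * LL f g) := hasSum_ite_eq none _
  have h3 := h1.add h2
  rw [sub_add_cancel] at h3
  have hfun : vv f g m = fun x : Option ℕ =>
      Option.elim x 0 (fun t => vv f g m (some t)) +
      (if x = none then (g 0 - m) / (g 0 + f 0) * LL f g else 0) := by
    funext x
    match x with
    | none => simp [vv]
    | some t => simp
  rw [hfun]
  exact h3

end

def pii (n : ℕ) : Option ℕ → ℕ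
  | none => n+1
  | some t => min t (n+1)

noncomputable def MM (n : ℕ) : Option ℕ → ℝ
  | none => -f n
  | some t => if t ≤ n then g t else -f n

section
variable (hf : Monotone f) (hg : Monotone g) (h0 : -f 0 < g 0) (hm1 : -f 0 ≤ m) (hm2 : m ≤ g 0)

include hf hg h0 hm1 hm2 in
lemma hw_hassum : HasSum (fun x => ENNReal.ofReal (vv f g m x)) 1 := by
  have hs : (∑' x, ENNReal.ofReal (vv f g m x)) = 1 := by
    rw [← ENNReal.ofReal_tsum_of_nonneg (hv_nonneg f g m hf hg h0 hm1 hm2)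
      (hsum_v f g m hf hg h0 hm1 hm2).summable,
      (hsum_v f g m hf hg h0 hm1 hm2).tsum_eq, ENNReal.ofReal_one]
  rw [← hs]
  exact ENNReal.summable.hasSum

noncomputable def pmf : PMF (Option ℕ) := ⟨_, hw_hassum f g m hf hg h0 hm1 hm2⟩

lemma pmf_apply (x : Option ℕ) :
    pmf f g m hf hg h0 hm1 hm2 x = ENNReal.ofReal (vv f g m x) := rfl

noncomputable def meas : Measure (Option ℕ) := (pmf f g m hf hg h0 hm1 hm2).toMeasure

instance : IsProbabilityMeasure (meas f g m hf hg h0 hm1 hm2) :=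
  PMF.toMeasure.isProbabilityMeasure _

lemma meas_singleton (x : Option ℕ) :
    meas f g m hf hg h0 hm1 hm2 {x} = ENNReal.ofReal (vv f g m x) :=
  PMF.toMeasure_apply_singleton _ x trivial

/-- the "floor" set at time n -/
def BB (n : ℕ) : Set (Option ℕ) := pii n ⁻¹' {n+1}

lemma BB_compl (n : ℕ) :
    (BB n)ᶜ = ↑((Finset.range (n+1)).image some) := by
  ext x
  match x with
  | none => simp [BB, pii]
  | some t =>
      simp only [BB, Set.mem_compl_iff, Set.mem_preimage, Set.mem_singleton_iff, pii,
        Finset.coe_image, Set.mem_image, Finset.mem_coe, Finset.mem_range]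
      constructor
      · intro h
        refine ⟨t, ?_, rfl⟩
        by_contra ht
        push_neg at ht
        exact h (by omega)
      · rintro ⟨u, hu, huv⟩
        cases huv
        omega

lemma meas_BB (n : ℕ) :
    meas f g m hf hg h0 hm1 hm2 (BB n) = ENNReal.ofReal (rseq f g m n) := by
  have hcompl : meas f g m hf hg h0 hm1 hm2 ((BB n)ᶜ) = ENNReal.ofReal (1 - rseq f g m n) := by
    rw [BB_compl, meas, PMF.toMeasure_apply_finset]
    rw [Finset.sum_image (fun a _ b _ h => Option.some_injective ℕ h)]
    simp only [pmf_apply]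
    rw [← ENNReal.ofReal_sum_of_nonneg (fun i _ => hv_nonneg f g m hf hg h0 hm1 hm2 (some i))]
    rw [hpartial f g m n]
  have h2 : meas f g m hf hg h0 hm1 hm2 (BB n) = 1 - ENNReal.ofReal (1 - rseq f g m n) := by
    rw [← hcompl, ← prob_compl_eq_one_sub (mset _), compl_compl]
  rw [h2]
  have h3 : ENNReal.ofReal (1 - rseq f g m n) + ENNReal.ofReal (rseq f g m n) = 1 := by
    rw [← ENNReal.ofReal_add (by
        have := hr_le1 f g m hf hg h0 hm1 hm2 n; linarith)
      (hr_nonneg f g m hf hg h0 hm2 n)]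
    norm_num
  rw [← h3, ENNReal.add_sub_cancel_left ENNReal.ofReal_ne_top]


omit hf hg h0 hm1 hm2 in
lemma pii_comp (n : ℕ) : pii n = (fun k => min k (n+1)) ∘ pii (n+1) := by
  funext x
  match x with
  | none => simp [pii]
  | some t => simp only [pii, Function.comp]; omega

omit hf hg h0 hm1 hm2 in
lemma MM_eq_comp (n : ℕ) :
    MM f g n = (fun k => if k ≤ n then g k else -f n) ∘ pii n := by
  funext x
  match x with
  | none => simp [MM, pii]
  | some t =>
      simp only [MM, pii, Function.comp]
      by_cases ht : t ≤ n
      · rw [if_pos ht]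
        exact ((if_pos (show min t (n+1) ≤ n by omega)).trans (congrArg g (min_eq_left (by omega : t ≤ n+1)))).symm
      · rw [if_neg ht]
        exact (if_neg (show ¬ min t (n+1) ≤ n by omega)).symm

noncomputable def filtr : Filtration ℕ (inferInstance : MeasurableSpace (Option ℕ)) where
  seq n := MeasurableSpace.comap (pii n) ⊤
  mono' := by
    intro i j hij
    induction j with
    | zero => rw [Nat.le_zero.mp hij]
    | succ j ih =>
        rcases Nat.lt_or_ge i (j+1) with h | h
        · refine le_trans (ih (by omega)) ?_
          show MeasurableSpace.comap (pii j) ⊤ ≤ MeasurableSpace.comap (pii (j+1)) ⊤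
          rw [pii_comp j, ← MeasurableSpace.comap_comp]
          exact MeasurableSpace.comap_mono le_top
        · rw [Nat.le_antisymm hij h]
  le' n := le_top

lemma MM_stronglyMeasurable (n : ℕ) :
    StronglyMeasurable[filtr n] (MM f g n) := by
  rw [MM_eq_comp]
  refine Measurable.stronglyMeasurable (Measurable.comp measurable_from_top ?_)
  exact measurable_iff_comap_le.mpr le_rfl

omit hm1 hm2 in
include hf hg h0 in
lemma MM_bounds (n : ℕ) (x : Option ℕ) : -f n ≤ MM f g n x ∧ MM f g n x ≤ g n := by
  have h1 := hf (Nat.zero_le n)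
  have h2 := hg (Nat.zero_le n)
  match x with
  | none => exact ⟨le_refl _, by simp only [MM]; linarith⟩
  | some t =>
      simp only [MM]
      by_cases ht : t ≤ n
      · rw [if_pos ht]
        have := hg (Nat.zero_le t)
        have := hg ht
        constructor <;> linarith
      · rw [if_neg ht]
        constructor <;> linarith

include hf hg h0 in
lemma MM_integrable (n : ℕ) :
    Integrable (MM f g n) (meas f g m hf hg h0 hm1 hm2) := by
  refine Integrable.mono' (integrable_const (max |f n| |g n|))
    ((measurable_of_countable _).aestronglyMeasurable) ?_
  refine Filter.Eventually.of_forall fun x => ?_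
  obtain ⟨hl, hu⟩ := MM_bounds f g hf hg h0 n x
  rw [Real.norm_eq_abs, abs_le]
  constructor
  · have h1 : f n ≤ |f n| := le_abs_self _
    have h2 : |f n| ≤ max |f n| |g n| := le_max_left _ _
    linarith
  · have h1 : g n ≤ |g n| := le_abs_self _
    have h2 : |g n| ≤ max |f n| |g n| := le_max_right _ _
    linarith

include hf hg h0 in
lemma int_floor (k : ℕ) :
    ∫ x in BB k, MM f g k x ∂(meas f g m hf hg h0 hm1 hm2) = rseq f g m k * (-f k) := by
  rw [setIntegral_congr_fun (mset _) (g := fun _ => -f k) ?_, setIntegral_const, measureReal_def,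
    meas_BB f g m hf hg h0 hm1 hm2 k, ENNReal.toReal_ofReal (hr_nonneg f g m hf hg h0 hm2 k)]
  · rw [smul_eq_mul]
  · intro x hx
    match x with
    | none => rfl
    | some t =>
        have : ¬ t ≤ k := by
          simp only [BB, Set.mem_preimage, Set.mem_singleton_iff, pii] at hx
          omega
        simp only [MM, if_neg this]

omit hm1 hm2 in
lemma BB_split (n : ℕ) : BB n = {some (n+1)} ∪ BB (n+1) := by
  ext x
  match x with
  | none => simp [BB, pii]
  | some t =>
      simp only [BB, Set.mem_preimage, Set.mem_singleton_iff, pii, Set.mem_union,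
        Set.union_def, Set.mem_setOf_eq, Option.some.injEq]
      omega

omit hm1 hm2 in
lemma MM_agree (n : ℕ) {x : Option ℕ} (hx : pii n x ≠ n+1) :
    MM f g n x = MM f g (n+1) x := by
  match x with
  | none => exact absurd rfl hx
  | some t =>
      have ht : t ≤ n := by simp only [pii] at hx; omega
      simp only [MM, if_pos ht, if_pos (by omega : t ≤ n+1)]

include hf hg h0 in
lemma int_step (n : ℕ) :
    ∫ x in BB n, MM f g (n+1) x ∂(meas f g m hf hg h0 hm1 hm2)
      = rseq f g m n * (-f n) := by
  have hdisj : Disjoint ({some (n+1)} : Set (Option ℕ)) (BB (n+1)) := by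
    rw [Set.disjoint_left]
    rintro x rfl hx
    simp only [BB, Set.mem_preimage, Set.mem_singleton_iff, pii] at hx
    omega
  rw [BB_split n, setIntegral_union hdisj (mset _)
    ((MM_integrable f g m hf hg h0 hm1 hm2 (n+1)).integrableOn)
    ((MM_integrable f g m hf hg h0 hm1 hm2 (n+1)).integrableOn),
    int_floor f g m hf hg h0 hm1 hm2 (n+1)]
  have h1 : ∫ x in ({some (n+1)} : Set (Option ℕ)), MM f g (n+1) x
      ∂(meas f g m hf hg h0 hm1 hm2) = (rseq f g m n - rseq f g m (n+1)) * g (n+1) := by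
    rw [setIntegral_congr_fun (mset _) (g := fun _ => g (n+1)) ?_, setIntegral_const, measureReal_def,
      meas_singleton]
    · have hnn : 0 ≤ rseq f g m n - rseq f g m (n+1) := by
        have := hr_anti f g m hf hg h0 hm2 n; linarith
      have : vv f g m (some (n+1)) = rseq f g m n - rseq f g m (n+1) := rfl
      rw [this, ENNReal.toReal_ofReal hnn, smul_eq_mul]
    · rintro x rfl
      simp [MM]
  rw [h1]
  have hden : g (n+1) + f (n+1) ≠ 0 := (hD f g hf hg h0 (n+1)).ne'
  have hrs : rseq f g m (n+1) = rseq f g m n * ((g (n+1) + f n) / (g (n+1) + f (n+1))) := rfl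
  rw [hrs]
  field_simp
  ring

include hf hg h0 in
lemma condexp_step (n : ℕ) :
    MM f g n =ᵐ[meas f g m hf hg h0 hm1 hm2]
      (meas f g m hf hg h0 hm1 hm2)[MM f g (n+1) | filtr n] := by
  refine ae_eq_condExp_of_forall_setIntegral_eq ((filtr).le n)
    (MM_integrable f g m hf hg h0 hm1 hm2 (n+1))
    (fun s _ _ => (MM_integrable f g m hf hg h0 hm1 hm2 n).integrableOn)
    ?_ (StronglyMeasurable.aestronglyMeasurable (MM_stronglyMeasurable f g n))
  rintro s ⟨u, -, rfl⟩ -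
  by_cases hu : (n+1) ∈ u
  · have hsplit : pii n ⁻¹' u = (pii n ⁻¹' (u \ {n+1})) ∪ BB n := by
      ext x
      simp only [Set.mem_preimage, Set.mem_union, Set.mem_diff, Set.mem_singleton_iff, BB]
      constructor
      · intro hx
        by_cases hh : pii n x = n+1
        · exact Or.inr hh
        · exact Or.inl ⟨hx, hh⟩
      · rintro (⟨hx, -⟩ | hx)
        · exact hx
        · rw [hx]; exact hu
    have hdisj : Disjoint (pii n ⁻¹' (u \ {n+1})) (BB n) := by
      rw [Set.disjoint_left]
      intro x hx hx'
      simp only [Set.mem_preimage, Set.mem_diff, Set.mem_singleton_iff] at hx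
      simp only [BB, Set.mem_preimage, Set.mem_singleton_iff] at hx'
      exact hx.2 hx'
    have hcong : ∀ h : ℕ → Option ℕ → ℝ, (∀ x ∈ pii n ⁻¹' (u \ {n+1}), True) → True := fun _ _ => trivial
    rw [hsplit, setIntegral_union hdisj (mset _)
        ((MM_integrable f g m hf hg h0 hm1 hm2 n).integrableOn)
        ((MM_integrable f g m hf hg h0 hm1 hm2 n).integrableOn),
      setIntegral_union hdisj (mset _)
        ((MM_integrable f g m hf hg h0 hm1 hm2 (n+1)).integrableOn)
        ((MM_integrable f g m hf hg h0 hm1 hm2 (n+1)).integrableOn),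
      int_floor f g m hf hg h0 hm1 hm2 n, int_step f g m hf hg h0 hm1 hm2 n]
    congr 1
    refine setIntegral_congr_fun (mset _) fun x hx => ?_
    simp only [Set.mem_preimage, Set.mem_diff, Set.mem_singleton_iff] at hx
    exact MM_agree f g n hx.2
  · refine setIntegral_congr_fun (mset _) fun x hx => ?_
    simp only [Set.mem_preimage] at hx
    refine MM_agree f g n fun hh => hu ?_
    rw [← hh]; exact hx

include hf hg h0 in
lemma mart : Martingale (MM f g) filtr (meas f g m hf hg h0 hm1 hm2) :=
  martingale_nat (fun n => MM_stronglyMeasurable f g n)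
    (fun n => MM_integrable f g m hf hg h0 hm1 hm2 n)
    (fun n => condexp_step f g m hf hg h0 hm1 hm2 n)

include hf hg h0 in
lemma int_M0 : ∫ x, MM f g 0 x ∂(meas f g m hf hg h0 hm1 hm2) = m := by
  have hrepr : MM f g 0 = fun x =>
      -f 0 + Set.indicator {some 0} (fun _ => g 0 + f 0) x := by
    funext x
    match x with
    | none => simp [MM]
    | some 0 => simp [MM]
    | some (t+1) =>
        rw [Set.indicator_of_notMem (by simp)]
        simp [MM]
  rw [hrepr]
  rw [integral_add (integrable_const _) ((integrable_const _).indicator (mset _)),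
    integral_const, integral_indicator_const _ (mset _), measureReal_def, measureReal_def, meas_singleton]
  have hc1 : vv f g m (some 0) = 1 - (g 0 - m) / (g 0 + f 0) := by
    simp [vv, rseq]
  have hcle := hc_le1 f g m hf hg h0 hm1
  rw [hc1, ENNReal.toReal_ofReal (by linarith), measure_univ, ENNReal.toReal_one]
  have hden : g 0 + f 0 ≠ 0 := (hD f g hf hg h0 0).ne'
  simp only [smul_eq_mul]
  field_simp
  ring

include hf hg h0 in
lemma event_eq :
    {x : Option ℕ | ∃ n, g n ≤ MM f g n x} = ({none} : Set (Option ℕ))ᶜ := by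
  ext x
  match x with
  | none =>
      simp only [Set.mem_setOf_eq, Set.mem_compl_iff, Set.mem_singleton_iff, not_true]
      simp only [iff_false, not_exists, not_le]
      intro n
      have h1 := hf (Nat.zero_le n)
      have h2 := hg (Nat.zero_le n)
      simp only [MM]
      linarith
  | some t =>
      simp only [Set.mem_setOf_eq, Set.mem_compl_iff, Set.mem_singleton_iff]
      constructor
      · intro _; simp
      · intro _; exact ⟨t, by simp [MM]⟩

include hf hg h0 in
lemma final_prob :
    ((meas f g m hf hg h0 hm1 hm2) {x | ∃ n, g n ≤ MM f g n x}).toReal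
      = 1 - (g 0 - m) / (g 0 + f 0) * LL f g := by
  rw [event_eq f g hf hg h0, prob_compl_eq_one_sub (mset _), meas_singleton]
  have hv : vv f g m none = (g 0 - m) / (g 0 + f 0) * LL f g := rfl
  have hnn : 0 ≤ (g 0 - m) / (g 0 + f 0) * LL f g :=
    mul_nonneg (hc_nonneg f g m hf hg h0 hm2) (hL_nonneg f g hf hg h0)
  have hle1 : (g 0 - m) / (g 0 + f 0) * LL f g ≤ 1 :=
    mul_le_one₀ (hc_le1 f g m hf hg h0 hm1) (hL_nonneg f g hf hg h0) (hL_le1 f g hf hg h0)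
  rw [hv, ENNReal.toReal_sub_of_le (by
      rw [← ENNReal.ofReal_one]
      exact ENNReal.ofReal_le_ofReal hle1) ENNReal.one_ne_top,
    ENNReal.toReal_one, ENNReal.toReal_ofReal hnn]

end
end VilleTightAux

open VilleTightAux in
/-- **Tightness of the generalised Ville inequality** (Theorem 2(b)): for every
`m ∈ [-f 0, g 0]` there is a martingale (the "floor hugger") bounded below by
`-f`, with initial mean `m`, attaining the bound with equality. -/
theorem generalised_villes_inequality_tight (f g : ℕ → ℝ)
    (hf : Monotone f) (hg : Monotone g) (h0 : -f 0 < g 0)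
    (m : ℝ) (hm : m ∈ Set.Icc (-f 0) (g 0)) :
    ∃ (Ω : Type) (mΩ : MeasurableSpace Ω) (μ : @Measure Ω mΩ)
      (_ : IsProbabilityMeasure μ) (𝒢 : Filtration ℕ mΩ) (M : ℕ → Ω → ℝ),
      Martingale M 𝒢 μ ∧
      (∀ n, ∀ᵐ ω ∂μ, -f n ≤ M n ω) ∧
      (∫ ω, M 0 ω ∂μ) = m ∧
      (μ {ω | ∃ n, g n ≤ M n ω}).toReal =
        1 - ((g 0 - m) / (g 0 + f 0)) *
          ∏' n : ℕ, ((g (n + 1) + f n) / (g (n + 1) + f (n + 1))) := by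
  obtain ⟨hm1, hm2⟩ := hm
  refine ⟨Option ℕ, inferInstance, meas f g m hf hg h0 hm1 hm2, inferInstance,
    filtr, MM f g, mart f g m hf hg h0 hm1 hm2, ?_, int_M0 f g m hf hg h0 hm1 hm2, ?_⟩
  · intro n
    exact Filter.Eventually.of_forall fun x => (MM_bounds f g hf hg h0 n x).1
  · have hLL : LL f g = ∏' n : ℕ, ((g (n + 1) + f n) / (g (n + 1) + f (n + 1))) := rfl
    rw [final_prob f g m hf hg h0 hm1 hm2, hLL]
end

section
/- Let f and g be non-decreasing real-valued functions on {0,1,2,...} with -f(0) < g(0), and let (M_n)_{n ≥ 0} be a supermartingale with M_n ≥ -f(n) for all n ≥ 0. Define s(n) = ∏_{t=n}^∞ (1 - (f(t+1)-f(t))/(g(t+1)+f(t+1))), which lies in [0,1], and define the process K_n = 1 - ((g(n) - M_n)/(g(n) + f(n))) · s(n). Then (K_n)_{n ≥ 0} is a non-negative supermartingale. -/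
open MeasureTheory

/-- Multipliability of products of factors in `[0,1]`. -/
lemma multipliable_of_nonneg_of_le_one {b : ℕ → ℝ} (h0 : ∀ n, 0 ≤ b n)
    (h1 : ∀ n, b n ≤ 1) : Multipliable b := by
  refine ⟨_, tendsto_atTop_ciInf ?_ ?_⟩
  · intro sfin tfin hst
    have := Finset.prod_sdiff (ι := ℕ) (M := ℝ) hst (f := b)
    have hle : ∏ i ∈ tfin \ sfin, b i ≤ 1 :=
      Finset.prod_le_one (fun i _ => h0 i) (fun i _ => h1 i)
    have hpos : 0 ≤ ∏ i ∈ sfin, b i := Finset.prod_nonneg fun i _ => h0 i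
    nlinarith [this]
  · exact ⟨0, by rintro _ ⟨sfin, rfl⟩; exact Finset.prod_nonneg fun i _ => h0 i⟩

/-- Shift lemma for `HasProd` over `ℕ`, valid in a monoid. -/
lemma hasProd_shift {c : ℕ → ℝ} {a : ℝ} (h : HasProd (fun t => c (t + 1)) a) :
    HasProd c (c 0 * a) := by
  set F : ℕ → ℝ := fun n => if n = 0 then 1 else c n with hF
  have h1 : HasProd F a := by
    have hinj : Function.Injective Nat.succ := Nat.succ_injective
    have : HasProd (F ∘ Nat.succ) a := by
      have : (F ∘ Nat.succ) = fun t => c (t + 1) := by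
        funext t; simp [hF, Nat.succ_ne_zero]
      rw [this]; exact h
    refine (Function.Injective.hasProd_iff hinj ?_).1 this
    intro x hx
    have hx0 : x = 0 := by
      by_contra h'
      exact hx ⟨x - 1, by omega⟩
    simp [hF, hx0]
  have h2 : HasProd (fun n => if n = 0 then c 0 else 1) (c 0) := hasProd_ite_eq 0 (c 0)
  have := h2.mul h1
  have heq : (fun n => (if n = 0 then c 0 else 1) * F n) = c := by
    funext n; cases n <;> simp [hF]
  rwa [heq] at this

/-- The auxiliary process `K n = 1 - ((g n - M n)/(g n + f n)) · s n`, where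
`s n = ∏_{t=n}^∞ (1 - (f (t+1) - f t)/(g (t+1) + f (t+1)))`, is a non-negative
supermartingale whenever `M` is a supermartingale bounded below by `-f`. -/
theorem aux_process_is_nonneg_supermartingale {Ω : Type*} {mΩ : MeasurableSpace Ω}
    {μ : Measure Ω} [IsProbabilityMeasure μ] {𝒢 : Filtration ℕ mΩ}
    {M : ℕ → Ω → ℝ} {f g : ℕ → ℝ}
    (hf : Monotone f) (hg : Monotone g) (h0 : -f 0 < g 0)
    (hM : Supermartingale M 𝒢 μ)
    (hlb : ∀ n, ∀ᵐ ω ∂μ, -f n ≤ M n ω)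
    (s : ℕ → ℝ)
    (hs : ∀ n, s n =
      ∏' t : ℕ, (1 - (f (n + t + 1) - f (n + t)) / (g (n + t + 1) + f (n + t + 1))))
    (hs01 : ∀ n, s n ∈ Set.Icc (0 : ℝ) 1)
    (K : ℕ → Ω → ℝ)
    (hK : ∀ n ω, K n ω = 1 - (g n - M n ω) / (g n + f n) * s n) :
    Supermartingale K 𝒢 μ ∧ ∀ n, 0 ≤ᵐ[μ] K n := by
  -- positivity of denominators
  have hd : ∀ n, 0 < g n + f n := fun n =>
    lt_of_lt_of_le (by linarith) (add_le_add (hg (Nat.zero_le n)) (hf (Nat.zero_le n)))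
  have hd' : ∀ n, 0 < g (n + 1) + f n := fun n =>
    lt_of_lt_of_le (hd n) (by have := hg (Nat.le_succ n); linarith)
  -- the factors
  set b : ℕ → ℝ := fun m => 1 - (f (m + 1) - f m) / (g (m + 1) + f (m + 1)) with hb
  have hbeq : ∀ m, b m = (g (m + 1) + f m) / (g (m + 1) + f (m + 1)) := by
    intro m
    show 1 - (f (m + 1) - f m) / (g (m + 1) + f (m + 1)) = _
    rw [eq_div_iff (hd (m + 1)).ne', sub_mul, div_mul_cancel₀ _ (hd (m + 1)).ne']
    ring
  have hb0 : ∀ m, 0 ≤ b m := fun m => by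
    rw [hbeq m]; exact le_of_lt (div_pos (hd' m) (hd (m + 1)))
  have hb1 : ∀ m, b m ≤ 1 := fun m => by
    rw [hbeq m]
    exact div_le_one_of_le₀ (by have := hf (Nat.le_succ m); linarith) (hd (m + 1)).le
  -- recursion s n = b n * s (n+1)
  have hrec : ∀ n, s n = b n * s (n + 1) := by
    intro n
    have hmult : Multipliable (fun t => b (n + 1 + t)) :=
      multipliable_of_nonneg_of_le_one (fun t => hb0 _) (fun t => hb1 _)
    have hshift : HasProd (fun t => b (n + t)) (b n * ∏' t, b (n + 1 + t)) := by
      have h' : HasProd (fun t => b (n + (t + 1))) (∏' t, b (n + 1 + t)) := by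
        have : (fun t => b (n + (t + 1))) = fun t => b (n + 1 + t) := by
          funext t; congr 1; omega
        rw [this]; exact hmult.hasProd
      have := hasProd_shift (c := fun t => b (n + t)) h'
      simpa using this
    have h1 : s n = ∏' t, b (n + t) := hs n
    have h2 : s (n + 1) = ∏' t, b (n + 1 + t) := hs (n + 1)
    rw [h1, h2, hshift.tprod_eq]
  -- key inequality
  have key : ∀ n (x : ℝ), -f n ≤ x →
      (g n - x) / (g n + f n) * s n ≤ (g (n + 1) - x) / (g (n + 1) + f (n + 1)) * s (n + 1) := by
    intro n x hx
    rw [hrec n, hbeq n]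
    have hs1 : 0 ≤ s (n + 1) := (hs01 (n + 1)).1
    have hcoef : (g n - x) / (g n + f n) * ((g (n + 1) + f n) / (g (n + 1) + f (n + 1))) ≤
        (g (n + 1) - x) / (g (n + 1) + f (n + 1)) := by
      rw [div_mul_div_comm, div_le_div_iff₀ (mul_pos (hd n) (hd (n + 1))) (hd (n + 1))]
      have hgm : g n ≤ g (n + 1) := hg (Nat.le_succ n)
      nlinarith [mul_nonneg (sub_nonneg.2 hgm) (by linarith : (0:ℝ) ≤ f n + x),
        (hd (n + 1)), (hd n)]
    calc (g n - x) / (g n + f n) * ((g (n + 1) + f n) / (g (n + 1) + f (n + 1)) * s (n + 1))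
        = (g n - x) / (g n + f n) * ((g (n + 1) + f n) / (g (n + 1) + f (n + 1))) * s (n + 1) := by
          ring
      _ ≤ (g (n + 1) - x) / (g (n + 1) + f (n + 1)) * s (n + 1) :=
          mul_le_mul_of_nonneg_right hcoef hs1
  -- rewrite K in affine form
  set c : ℕ → ℝ := fun n => s n / (g n + f n) with hc
  have hc0 : ∀ n, 0 ≤ c n := fun n => div_nonneg (hs01 n).1 (hd n).le
  have hKeq : ∀ n, K n = fun ω => (1 - g n * c n) + c n * M n ω := by
    intro n; funext ω; rw [hK n ω, hc]; field_simp; ring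
  have hint : ∀ n, Integrable (K n) μ := by
    intro n
    rw [hKeq n]
    exact (integrable_const _).add ((hM.integrable n).const_mul _)
  constructor
  · refine supermartingale_nat ?_ hint ?_
    · intro n
      rw [hKeq n]
      exact stronglyMeasurable_const.add ((hM.stronglyAdapted n).const_mul _)
    · intro n
      have hcond : μ[K (n + 1)|𝒢 n] =ᵐ[μ]
          fun ω => (1 - g (n + 1) * c (n + 1)) + c (n + 1) * (μ[M (n + 1)|𝒢 n]) ω := by
        rw [hKeq (n + 1)]
        have h1 : μ[(fun _ => (1 - g (n + 1) * c (n + 1)) : Ω → ℝ) +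
            (c (n + 1) • M (n + 1))|𝒢 n] =ᵐ[μ]
            μ[(fun _ => (1 - g (n + 1) * c (n + 1)) : Ω → ℝ)|𝒢 n] +
            μ[c (n + 1) • M (n + 1)|𝒢 n] :=
          condExp_add (integrable_const _) ((hM.integrable (n + 1)).smul _) _
        have h2 : μ[c (n + 1) • M (n + 1)|𝒢 n] =ᵐ[μ] c (n + 1) • μ[M (n + 1)|𝒢 n] :=
          condExp_smul _ _ _
        have heq : (fun ω => (1 - g (n + 1) * c (n + 1)) + c (n + 1) * M (n + 1) ω) =
            (fun _ => (1 - g (n + 1) * c (n + 1)) : Ω → ℝ) + (c (n + 1) • M (n + 1)) := by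
          funext ω; simp [Pi.add_apply, Pi.smul_apply, smul_eq_mul]
        rw [heq]
        filter_upwards [h1, h2] with ω hω1 hω2
        simp only [Pi.add_apply, Pi.smul_apply, smul_eq_mul] at hω1 hω2 ⊢
        rw [hω1, hω2, condExp_const (𝒢.le n)]
      have hstep := hM.2.1 n (n + 1) (Nat.le_succ n)
      filter_upwards [hcond, hstep, hlb n] with ω hω1 hω2 hω3
      rw [hω1, hKeq n]
      have hkey := key n (M n ω) hω3
      have h1 : c (n + 1) * (μ[M (n + 1)|𝒢 n]) ω ≤ c (n + 1) * M n ω :=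
        mul_le_mul_of_nonneg_left hω2 (hc0 (n + 1))
      have h2 : (g n - M n ω) * c n ≤ (g (n + 1) - M n ω) * c (n + 1) := by
        have := hkey
        rw [hc]
        simp only [div_mul_eq_mul_div, ← mul_div_assoc] at this ⊢
        convert this using 1 <;> ring
      simp only []
      nlinarith [h1, h2]
  · intro n
    filter_upwards [hlb n] with ω hx
    show (0:ℝ) ≤ K n ω
    rw [hK n ω]
    have hq : (g n - M n ω) / (g n + f n) ≤ 1 := (div_le_one (hd n)).2 (by linarith)
    have hs0 := (hs01 n).1
    have hs1 := (hs01 n).2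
    nlinarith [mul_nonneg (by linarith : (0:ℝ) ≤ 1 - (g n - M n ω) / (g n + f n)) hs0]
end

section
/- Let f, g : [0,∞) → [0,∞) be increasing with f differentiable, and suppose their restrictions to {0,1,2,...} satisfy -f(0) < g(0). Let (M_n)_{n ≥ 0} be a supermartingale bounded below by M_n ≥ -f(n) for all integers n ≥ 0, with E[M_0] ∈ [-f(0), g(0)]. Then P(∃ n ≥ 0 : M_n ≥ g(n)) ≤ 1 - ((g(0) - E[M_0])/(g(0) + f(0))) · exp(-∫_0^∞ f'(t)/(g(t)+f(t)) dt). -/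
open MeasureTheory


lemma villeDerivNonneg {f f' : ℝ → ℝ} (hf_mono : StrictMonoOn f (Set.Ici 0))
    (hf' : ∀ t, 0 ≤ t → HasDerivAt f (f' t) t) {t : ℝ} (ht : 0 ≤ t) : 0 ≤ f' t := by
  have h := ((hf' t ht).hasDerivWithinAt (s := Set.Ioi t))
  rw [hasDerivWithinAt_iff_tendsto_slope] at h
  have hs : Set.Ioi t \ {t} = Set.Ioi t := by
    ext y; simp only [Set.mem_diff, Set.mem_Ioi, Set.mem_singleton_iff, and_iff_left_iff_imp]
    intro hy; exact ne_of_gt hy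
  rw [hs] at h
  refine ge_of_tendsto h ?_
  filter_upwards [self_mem_nhdsWithin] with y hy
  have hy' : t < y := hy
  rw [slope_def_field]
  have hle : f t ≤ f y := (hf_mono.monotoneOn) ht (le_trans ht hy'.le) hy'.le
  exact div_nonneg (by linarith) (by linarith)

lemma villeInterval {f g f' : ℝ → ℝ} (hf_mono : StrictMonoOn f (Set.Ici 0))
    (hg_mono : StrictMonoOn g (Set.Ici 0)) (hf' : ∀ t, 0 ≤ t → HasDerivAt f (f' t) t)
    (h0 : 0 < g 0 + f 0) {a b : ℝ} (ha : 0 ≤ a) (hab : a ≤ b) :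
    ENNReal.ofReal (Real.log (g b + f b) - Real.log (g b + f a)) ≤
      ∫⁻ t in Set.Ioc a b, ENNReal.ofReal (f' t / (g t + f t)) := by
  have hb : (0:ℝ) ≤ b := le_trans ha hab
  have hgm : ∀ s t : ℝ, 0 ≤ s → s ≤ t → g s ≤ g t := fun s t hs hst =>
    hg_mono.monotoneOn hs (le_trans hs hst) hst
  have hfm : ∀ s t : ℝ, 0 ≤ s → s ≤ t → f s ≤ f t := fun s t hs hst =>
    hf_mono.monotoneOn hs (le_trans hs hst) hst
  have hposc : ∀ t : ℝ, 0 ≤ t → 0 < g b + f t := by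
    intro t ht
    have h1 := hgm 0 b le_rfl hb
    have h2 := hfm 0 t le_rfl ht
    linarith
  have hposg : ∀ t : ℝ, 0 ≤ t → 0 < g t + f t := by
    intro t ht
    have h1 := hgm 0 t le_rfl ht
    have h2 := hfm 0 t le_rfl ht
    linarith
  have hφ : ∀ t ∈ Set.Icc a b, HasDerivAt (fun u => Real.log (g b + f u)) (f' t / (g b + f t)) t :=
    fun t ht => (((hf' t (le_trans ha ht.1)).const_add (g b)).log
      (ne_of_gt (hposc t (le_trans ha ht.1))))
  have hcont : ContinuousOn (fun u => Real.log (g b + f u)) (Set.Icc a b) :=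
    fun t ht => (hφ t ht).continuousAt.continuousWithinAt
  have hnn : ∀ t ∈ Set.Ioo a b, 0 ≤ f' t / (g b + f t) := fun t ht =>
    div_nonneg (villeDerivNonneg hf_mono hf' (le_trans ha ht.1.le))
      (hposc t (le_trans ha ht.1.le)).le
  have hInt : IntervalIntegrable (fun t => f' t / (g b + f t)) volume a b := by
    apply intervalIntegral.intervalIntegrable_deriv_of_nonneg
    · rwa [Set.uIcc_of_le hab]
    · rw [min_eq_left hab, max_eq_right hab]; exact fun t ht => hφ t (Set.Ioo_subset_Icc_self ht)
    · rw [min_eq_left hab, max_eq_right hab]; exact hnn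
  have hFTC : ∫ t in a..b, f' t / (g b + f t) =
      Real.log (g b + f b) - Real.log (g b + f a) :=
    intervalIntegral.integral_eq_sub_of_hasDerivAt
      (fun t ht => hφ t (by rwa [Set.uIcc_of_le hab] at ht)) hInt
  have hIntOn : IntegrableOn (fun t => f' t / (g b + f t)) (Set.Ioc a b) volume := by
    rw [← intervalIntegrable_iff_integrableOn_Ioc_of_le hab]; exact hInt
  calc ENNReal.ofReal (Real.log (g b + f b) - Real.log (g b + f a))
      = ENNReal.ofReal (∫ t in Set.Ioc a b, f' t / (g b + f t)) := by
        rw [← hFTC, intervalIntegral.integral_of_le hab]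
    _ = ∫⁻ t in Set.Ioc a b, ENNReal.ofReal (f' t / (g b + f t)) := by
        apply ofReal_integral_eq_lintegral_ofReal hIntOn
        filter_upwards [ae_restrict_mem measurableSet_Ioc] with t ht
        exact div_nonneg (villeDerivNonneg hf_mono hf' (le_trans ha ht.1.le))
          (hposc t (le_trans ha ht.1.le)).le
    _ ≤ ∫⁻ t in Set.Ioc a b, ENNReal.ofReal (f' t / (g t + f t)) := by
        apply lintegral_mono_ae
        filter_upwards [ae_restrict_mem measurableSet_Ioc] with t ht
        apply ENNReal.ofReal_le_ofReal
        have ht0 : 0 ≤ t := le_trans ha ht.1.le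
        have h1 : g t + f t ≤ g b + f t := by have := hgm t b ht0 ht.2; linarith
        exact div_le_div_of_nonneg_left (villeDerivNonneg hf_mono hf' ht0) (hposg t ht0) h1
          |>.trans_eq rfl

open scoped Classical in
lemma villeProdGe {f g f' : ℝ → ℝ} (hf_mono : StrictMonoOn f (Set.Ici 0))
    (hg_mono : StrictMonoOn g (Set.Ici 0)) (hf' : ∀ t, 0 ≤ t → HasDerivAt f (f' t) t)
    (h0 : 0 < g 0 + f 0) (N : ℕ) :
    (if (∫⁻ t in Set.Ioi (0 : ℝ), ENNReal.ofReal (f' t / (g t + f t))) = ⊤ then (0:ℝ)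
     else Real.exp
       (-(∫⁻ t in Set.Ioi (0 : ℝ), ENNReal.ofReal (f' t / (g t + f t))).toReal)) ≤
    ∏ k ∈ Finset.Ioc 0 N, (g k + f ((k - 1 : ℕ) : ℕ)) / (g k + f k) := by
  have hfm : ∀ i j : ℕ, i ≤ j → f i ≤ f j := fun i j h =>
    hf_mono.monotoneOn (Set.mem_Ici.mpr (Nat.cast_nonneg i)) (Set.mem_Ici.mpr (Nat.cast_nonneg j)) (Nat.cast_le.2 h)
  have hgm : ∀ i j : ℕ, i ≤ j → g i ≤ g j := fun i j h =>
    hg_mono.monotoneOn (Set.mem_Ici.mpr (Nat.cast_nonneg i)) (Set.mem_Ici.mpr (Nat.cast_nonneg j)) (Nat.cast_le.2 h)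
  have hq : ∀ i j : ℕ, 0 < g i + f j := by
    intro i j
    have h1 := hgm 0 i (Nat.zero_le _)
    have h2 := hfm 0 j (Nat.zero_le _)
    push_cast at h1 h2
    linarith
  have hrpos : ∀ k : ℕ, 0 < (g k + f ((k - 1 : ℕ) : ℕ)) / (g k + f k) :=
    fun k => div_pos (hq k (k-1)) (hq k k)
  have hprodpos : (0:ℝ) < ∏ k ∈ Finset.Ioc 0 N, (g k + f ((k - 1 : ℕ) : ℕ)) / (g k + f k) :=
    Finset.prod_pos fun k _ => hrpos k
  split_ifs with hT
  · exact hprodpos.le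
  · set L : ℕ → ℝ := fun k => Real.log (g k + f k) - Real.log (g k + f ((k-1 : ℕ) : ℕ)) with hL
    have hLnn : ∀ k : ℕ, 0 ≤ L k := by
      intro k
      have : g k + f ((k-1:ℕ):ℕ) ≤ g k + f k := by
        have := hfm (k-1) k (Nat.sub_le k 1); linarith
      have := Real.log_le_log (hq k (k-1)) this
      simp only [hL]; linarith
    have hsum : ∀ m : ℕ, ∑ k ∈ Finset.Ioc 0 m, ENNReal.ofReal (L k) ≤
        ∫⁻ t in Set.Ioc (0:ℝ) (m:ℝ), ENNReal.ofReal (f' t / (g t + f t)) := by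
      intro m
      induction m with
      | zero => simp
      | succ n ih =>
        rw [Finset.sum_Ioc_succ_top (Nat.zero_le _)]
        have hunion : Set.Ioc (0:ℝ) ((n+1:ℕ):ℝ) =
            Set.Ioc (0:ℝ) (n:ℝ) ∪ Set.Ioc ((n:ℝ)) ((n+1:ℕ):ℝ) := by
          refine (Set.Ioc_union_Ioc_eq_Ioc (Nat.cast_nonneg n) ?_).symm
          push_cast; linarith
        have hdisj : Disjoint (Set.Ioc (0:ℝ) (n:ℝ)) (Set.Ioc ((n:ℝ)) ((n+1:ℕ):ℝ)) := by
          apply Set.disjoint_left.2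
          rintro t ⟨_, h1⟩ ⟨h2, _⟩
          exact absurd h1 (not_le.2 h2)
        rw [hunion, lintegral_union measurableSet_Ioc hdisj]
        refine add_le_add ih ?_
        have hkey := villeInterval hf_mono hg_mono hf' h0 (a := (n:ℝ)) (b := ((n+1:ℕ):ℝ))
          (Nat.cast_nonneg n) (by push_cast; linarith)
        simp only [hL, Nat.add_sub_cancel]
        exact hkey
    have hsum' : ENNReal.ofReal (∑ k ∈ Finset.Ioc 0 N, L k) ≤
        ∫⁻ t in Set.Ioi (0 : ℝ), ENNReal.ofReal (f' t / (g t + f t)) := by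
      rw [ENNReal.ofReal_sum_of_nonneg (fun k _ => hLnn k)]
      exact le_trans (hsum N) (lintegral_mono_set Set.Ioc_subset_Ioi_self)
    have hsumR : ∑ k ∈ Finset.Ioc 0 N, L k ≤
        (∫⁻ t in Set.Ioi (0 : ℝ), ENNReal.ofReal (f' t / (g t + f t))).toReal :=
      (ENNReal.ofReal_le_iff_le_toReal hT).mp hsum'
    have hprod : ∏ k ∈ Finset.Ioc 0 N, (g k + f ((k - 1 : ℕ) : ℕ)) / (g k + f k) =
        Real.exp (∑ k ∈ Finset.Ioc 0 N,
          Real.log ((g k + f ((k - 1 : ℕ) : ℕ)) / (g k + f k))) := by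
      rw [Real.exp_sum]
      exact Finset.prod_congr rfl fun k _ => (Real.exp_log (hrpos k)).symm
    rw [hprod]
    apply Real.exp_le_exp.2
    have hlog : ∀ k : ℕ, Real.log ((g k + f ((k - 1 : ℕ) : ℕ)) / (g k + f k)) = -(L k) := by
      intro k
      rw [Real.log_div (ne_of_gt (hq k (k-1))) (ne_of_gt (hq k k))]
      simp only [hL]; ring
    simp only [hlog, Finset.sum_neg_distrib]
    linarith

noncomputable def villeR (f g : ℝ → ℝ) (k : ℕ) : ℝ := (g k + f ((k - 1 : ℕ) : ℕ)) / (g k + f k)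
noncomputable def villeP (f g : ℝ → ℝ) (N n : ℕ) : ℝ := ∏ k ∈ Finset.Ioc n N, villeR f g k
noncomputable def villeA (f g : ℝ → ℝ) (N n : ℕ) : ℝ := villeP f g N n / (g n + f n)

lemma villeDiscrete {Ω : Type*} {mΩ : MeasurableSpace Ω} {μ : Measure Ω}
    [IsProbabilityMeasure μ] {𝒢 : Filtration ℕ mΩ} {M : ℕ → Ω → ℝ} {f g : ℝ → ℝ}
    (hfm : ∀ i j : ℕ, i ≤ j → f i ≤ f j) (hgm : ∀ i j : ℕ, i ≤ j → g i ≤ g j)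
    (hq : ∀ i j : ℕ, 0 < g i + f j)
    (hM : Supermartingale M 𝒢 μ) (hlb : ∀ n : ℕ, ∀ᵐ ω ∂μ, -f n ≤ M n ω) (N : ℕ) :
    (μ {ω | ∃ n, n ≤ N ∧ g n ≤ M n ω}).toReal ≤
      1 - villeA f g N 0 * (g (0:ℕ) - ∫ ω, M 0 ω ∂μ) := by
  classical
  set P : ℕ → ℝ := villeP f g N with hPdef
  set α : ℕ → ℝ := villeA f g N with hαdef
  have hrpos : ∀ k : ℕ, 0 < villeR f g k := fun k => div_pos (hq _ _) (hq _ _)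
  have hr1 : ∀ k : ℕ, villeR f g k ≤ 1 := by
    intro k
    rw [villeR, div_le_one (hq _ _)]
    have := hfm (k-1) k (Nat.sub_le k 1); linarith
  have hPpos : ∀ n, 0 < P n := fun n => Finset.prod_pos fun k _ => hrpos k
  have hP1 : ∀ n, P n ≤ 1 := fun n =>
    Finset.prod_le_one (fun k _ => (hrpos k).le) fun k _ => hr1 k
  have hPrec : ∀ n, n < N → P n = villeR f g (n+1) * P (n+1) := by
    intro n hn
    rw [hPdef]
    show villeP f g N n = _
    rw [villeP, villeP, ← Finset.Icc_add_one_left_eq_Ioc,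
      Finset.Icc_eq_cons_Ioc (show n + 1 ≤ N from Nat.succ_le_of_lt hn), Finset.prod_cons]
  have hαpos : ∀ n, 0 < α n := fun n => div_pos (hPpos n) (hq _ _)
  have hαgf : ∀ n, α n * (g n + f n) = P n := fun n => div_mul_cancel₀ _ (ne_of_gt (hq _ _))
  have hα2 : ∀ n, n < N → α (n+1) ≤ α n := by
    intro n hn
    rw [hαdef]
    show villeP f g N (n+1) / _ ≤ villeP f g N n / _
    rw [show villeP f g N n = P n from rfl, show villeP f g N (n+1) = P (n+1) from rfl,
      hPrec n hn, div_le_div_iff₀ (hq _ _) (hq _ _)]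
    have hr : villeR f g (n+1) * (g (n+1:ℕ) + f (n+1:ℕ)) = g (n+1:ℕ) + f n := by
      rw [villeR, Nat.add_sub_cancel, div_mul_cancel₀ _ (ne_of_gt (hq _ _))]
    calc P (n+1) * (g n + f n) ≤ P (n+1) * (g (n+1:ℕ) + f n) := by
          have h1 := hgm n (n+1) (Nat.le_succ n)
          have h2 := (hPpos (n+1)).le
          nlinarith
      _ = villeR f g (n+1) * P (n+1) * (g (n+1:ℕ) + f (n+1:ℕ)) := by
          rw [mul_comm (villeR f g (n+1)) (P (n+1)), mul_assoc, hr]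
  have hE : ∀ n, n < N → α (n+1) * (g (n+1:ℕ) + f n) = P n := by
    intro n hn
    have : α (n+1) * (g (n+1:ℕ) + f (n+1:ℕ)) = P (n+1) := hαgf (n+1)
    rw [hPrec n hn]
    have hgoal : α (n+1) * (g (n+1:ℕ) + f n) =
        (P (n+1) / (g (n+1:ℕ) + f (n+1:ℕ))) * (g (n+1:ℕ) + f n) := rfl
    rw [hgoal, villeR, Nat.add_sub_cancel]
    field_simp
  set X : ℕ → Ω → ℝ :=
    fun n ω => α (min n N) * M (min n N) ω + (1 - α (min n N) * g ((min n N : ℕ) : ℝ)) with hXdef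
  have hadpX : StronglyAdapted 𝒢 X := by
    intro n
    have h1 : StronglyMeasurable[𝒢 n] (M (min n N)) :=
      (hM.1 (min n N)).mono (𝒢.mono (min_le_left n N))
    exact (stronglyMeasurable_const.mul h1).add stronglyMeasurable_const
  have hintX : ∀ n, Integrable (X n) μ := fun n =>
    ((hM.2.2 (min n N)).const_mul _).add (integrable_const _)
  have hstep : ∀ i, μ[X (i+1)|𝒢 i] ≤ᵐ[μ] X i := by
    intro i
    by_cases hi : i < N
    · have hmin1 : min i N = i := min_eq_left hi.le
      have hmin2 : min (i+1) N = i+1 := min_eq_left (Nat.succ_le_of_lt hi)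
      have hXi1 : X (i+1) = (α (i+1) • M (i+1)) + fun _ => (1 - α (i+1) * g (i+1:ℕ)) := by
        funext ω
        simp only [hXdef, hmin2, Pi.add_apply, Pi.smul_apply, smul_eq_mul]
      have hXi : X i = fun ω => α i * M i ω + (1 - α i * g (i:ℕ)) := by
        funext ω; simp only [hXdef, hmin1]
      rw [hXi1, hXi]
      have hce : μ[(α (i+1) • M (i+1)) + (fun _ => (1 - α (i+1) * g (i+1:ℕ)))|𝒢 i] =ᵐ[μ]
          fun ω => α (i+1) * (μ[M (i+1)|𝒢 i]) ω + (1 - α (i+1) * g (i+1:ℕ)) := by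
        have h1 := condExp_add (μ := μ) (m := 𝒢 i)
          ((hM.2.2 (i+1)).smul (α (i+1))) (integrable_const (1 - α (i+1) * g (i+1:ℕ)))
        have h2 := condExp_smul (μ := μ) (m := 𝒢 i) (α (i+1)) (M (i+1))
        have h3 := condExp_const (μ := μ) (𝒢.le i) (1 - α (i+1) * g (i+1:ℕ))
        refine h1.trans ?_
        filter_upwards [h2] with ω h2ω
        simp only [Pi.add_apply, Pi.smul_apply, smul_eq_mul] at h2ω ⊢
        rw [h2ω, h3]
      refine hce.le.trans ?_
      filter_upwards [hM.2.1 i (i+1) (Nat.le_succ i), hlb i] with ω h4 h6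
      have p0 : 0 ≤ α (i+1) * (M i ω - (μ[M (i+1)|𝒢 i]) ω) :=
        mul_nonneg (hαpos (i+1)).le (by linarith)
      have p1 : 0 ≤ (α i - α (i+1)) * (M i ω + f i) :=
        mul_nonneg (by linarith [hα2 i hi]) (by linarith)
      nlinarith [hE i hi, hαgf i]
    · have hN' : N ≤ i := not_lt.1 hi
      have hmin1 : min i N = N := min_eq_right hN'
      have hmin2 : min (i+1) N = N := min_eq_right (le_trans hN' (Nat.le_succ i))
      have hXeq : X (i+1) = X i := by
        funext ω; simp only [hXdef, hmin1, hmin2]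
      rw [hXeq, condExp_of_stronglyMeasurable (𝒢.le i) (hadpX i) (hintX i)]
  have hX : Supermartingale X 𝒢 μ := supermartingale_nat hadpX hintX hstep
  set τ : Ω → ℕ := hittingBtwn (fun n ω => M n ω - g n) (Set.Ici (0:ℝ)) 0 N with hτdef
  set τ' : Ω → WithTop ℕ := fun ω => (τ ω : WithTop ℕ) with hτ'def
  have hDadp : Adapted 𝒢 (fun n ω => M n ω - g n) := fun n =>
    ((hM.1 n).sub stronglyMeasurable_const).measurable
  have hτst : IsStoppingTime 𝒢 τ' := hDadp.isStoppingTime_hittingBtwn measurableSet_Ici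
  have hτle : ∀ ω, τ ω ≤ N := fun ω => hittingBtwn_le ω
  have hτle' : ∀ ω, τ' ω ≤ N := fun ω => WithTop.coe_le_coe.2 (hτle ω)
  have hOS : ∫ ω, stoppedValue X τ' ω ∂μ ≤ ∫ ω, X 0 ω ∂μ := by
    have h := (hX.neg).expected_stoppedValue_mono (isStoppingTime_const 𝒢 0) hτst
      (fun ω => WithTop.coe_le_coe.2 (Nat.zero_le _)) hτle'
    have e0 : stoppedValue (-X) (fun _ => ((0:ℕ) : WithTop ℕ)) = fun ω => -(X 0 ω) := rfl
    have e1 : stoppedValue (-X) τ' = fun ω => -(stoppedValue X τ' ω) := rfl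
    change ∫ x, -(X 0 x) ∂μ ≤ ∫ x, -(stoppedValue X τ' x) ∂μ at h
    simp only [integral_neg] at h
    linarith
  have hsvInt : Integrable (stoppedValue X τ') μ := by
    have h := ((hX.neg).integrable_stoppedValue hτst hτle').neg
    have e1 : stoppedValue X τ' = -stoppedValue (-X) τ' := by
      funext ω; simp [stoppedValue]
    rw [e1]; exact h
  have hAmeas : MeasurableSet {ω | ∃ n, n ≤ N ∧ g n ≤ M n ω} := by
    have : {ω | ∃ n, n ≤ N ∧ g n ≤ M n ω} = ⋃ n, ⋃ _ : n ≤ N, {ω | g n ≤ M n ω} := by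
      ext ω; simp
    rw [this]
    refine MeasurableSet.iUnion fun n => MeasurableSet.iUnion fun _ => ?_
    exact measurableSet_le measurable_const ((hM.1 n).measurable.le (𝒢.le n))
  have hind : ∀ᵐ ω ∂μ, Set.indicator {ω | ∃ n, n ≤ N ∧ g n ≤ M n ω} 1 ω ≤
      stoppedValue X τ' ω := by
    filter_upwards [ae_all_iff.2 hlb] with ω hω
    have hτN : min (τ ω) N = τ ω := min_eq_left (hτle ω)
    have hXτ : stoppedValue X τ' ω =
        α (τ ω) * M (τ ω) ω + (1 - α (τ ω) * g (τ ω)) := by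
      show X (τ ω) ω = _
      simp only [hXdef, hτN]
    by_cases hmem : ω ∈ {ω | ∃ n, n ≤ N ∧ g n ≤ M n ω}
    · rw [Set.indicator_of_mem hmem, hXτ]
      obtain ⟨j, hjN, hj⟩ := hmem
      have hhit : (M (τ ω) ω - g (τ ω)) ∈ Set.Ici (0:ℝ) := by
        have := stoppedValue_hittingBtwn_mem (u := fun n ω => M n ω - g n) (s := Set.Ici (0:ℝ))
          (n := 0) (m := N) (ω := ω) ⟨j, ⟨Nat.zero_le _, hjN⟩, by
            simp only [Set.mem_Ici]; linarith⟩
        exact this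
      simp only [Set.mem_Ici, sub_nonneg] at hhit
      have := (hαpos (τ ω)).le
      simp only [Pi.one_apply]
      nlinarith
    · rw [Set.indicator_of_notMem hmem, hXτ]
      have hlb' : -f (τ ω) ≤ M (τ ω) ω := hω (τ ω)
      have h1 : α (τ ω) * (g (τ ω) + f (τ ω)) = P (τ ω) := hαgf (τ ω)
      nlinarith [(hαpos (τ ω)).le, hP1 (τ ω)]
  have hAint : (μ {ω | ∃ n, n ≤ N ∧ g n ≤ M n ω}).toReal ≤
      ∫ ω, stoppedValue X τ' ω ∂μ := by
    rw [← measureReal_def, ← integral_indicator_one hAmeas]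
    exact integral_mono_ae ((integrable_const (1:ℝ)).indicator hAmeas) hsvInt hind
  have hm0 : min 0 N = 0 := min_eq_left (Nat.zero_le N)
  have hX0 : ∫ ω, X 0 ω ∂μ = α 0 * (∫ ω, M 0 ω ∂μ) + (1 - α 0 * g (0:ℕ)) := by
    simp only [hXdef, hm0]
    rw [integral_add ((hM.2.2 0).const_mul _) (integrable_const _), integral_const_mul,
      integral_const]
    simp
  calc (μ {ω | ∃ n, n ≤ N ∧ g n ≤ M n ω}).toReal
      ≤ ∫ ω, stoppedValue X τ' ω ∂μ := hAint
    _ ≤ ∫ ω, X 0 ω ∂μ := hOS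
    _ = α 0 * (∫ ω, M 0 ω ∂μ) + (1 - α 0 * g (0:ℕ)) := hX0
    _ = 1 - α 0 * (g (0:ℕ) - ∫ ω, M 0 ω ∂μ) := by ring

open scoped Classical in
/-- **Continuous-form generalised Ville inequality** (Corollary 3): for
increasing `f, g : [0,∞) → [0,∞)` with `f` differentiable, a supermartingale
bounded below by `-f` crosses `g` with probability at most
`1 - ((g 0 - E[M 0])/(g 0 + f 0)) · exp(-∫_0^∞ f'(t)/(g t + f t) dt)`,
where the exponential is interpreted as `0` if the integral is infinite. -/
theorem continuous_generalised_ville {Ω : Type*} {mΩ : MeasurableSpace Ω}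
    {μ : Measure Ω} [IsProbabilityMeasure μ] {𝒢 : Filtration ℕ mΩ}
    {M : ℕ → Ω → ℝ} {f g f' : ℝ → ℝ}
    (hf_mono : StrictMonoOn f (Set.Ici 0)) (hg_mono : StrictMonoOn g (Set.Ici 0))
    (hf_nonneg : ∀ t, 0 ≤ t → 0 ≤ f t) (hg_nonneg : ∀ t, 0 ≤ t → 0 ≤ g t)
    (hf' : ∀ t, 0 ≤ t → HasDerivAt f (f' t) t)
    (h0 : -f 0 < g 0)
    (hM : Supermartingale M 𝒢 μ)
    (hlb : ∀ n : ℕ, ∀ᵐ ω ∂μ, -f n ≤ M n ω)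
    (hinit : (∫ ω, M 0 ω ∂μ) ∈ Set.Icc (-f 0) (g 0)) :
    (μ {ω | ∃ n : ℕ, g n ≤ M n ω}).toReal ≤
      1 - ((g 0 - ∫ ω, M 0 ω ∂μ) / (g 0 + f 0)) *
        (if (∫⁻ t in Set.Ioi (0 : ℝ), ENNReal.ofReal (f' t / (g t + f t))) = ⊤ then 0
         else Real.exp
           (-(∫⁻ t in Set.Ioi (0 : ℝ), ENNReal.ofReal (f' t / (g t + f t))).toReal)) := by
  have hfm : ∀ i j : ℕ, i ≤ j → f i ≤ f j := fun i j h =>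
    hf_mono.monotoneOn (Set.mem_Ici.mpr (Nat.cast_nonneg i)) (Set.mem_Ici.mpr (Nat.cast_nonneg j))
      (Nat.cast_le.2 h)
  have hgm : ∀ i j : ℕ, i ≤ j → g i ≤ g j := fun i j h =>
    hg_mono.monotoneOn (Set.mem_Ici.mpr (Nat.cast_nonneg i)) (Set.mem_Ici.mpr (Nat.cast_nonneg j))
      (Nat.cast_le.2 h)
  have h0' : (0:ℝ) < g 0 + f 0 := by linarith
  have hq : ∀ i j : ℕ, 0 < g i + f j := by
    intro i j
    have h1 := hgm 0 i (Nat.zero_le _)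
    have h2 := hfm 0 j (Nat.zero_le _)
    push_cast at h1 h2
    linarith
  set T := ∫⁻ t in Set.Ioi (0 : ℝ), ENNReal.ofReal (f' t / (g t + f t)) with hT
  set E0 : ℝ := if T = ⊤ then 0 else Real.exp (-T.toReal) with hE0
  set c : ℝ := (g 0 - ∫ ω, M 0 ω ∂μ) / (g 0 + f 0) with hc
  have hEM : (0:ℝ) ≤ g 0 - ∫ ω, M 0 ω ∂μ := by linarith [hinit.2]
  have hc0 : 0 ≤ c := div_nonneg hEM h0'.le
  have hc1 : c ≤ 1 := by rw [hc, div_le_one h0']; linarith [hinit.1]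
  have hE00 : 0 ≤ E0 := by
    rw [hE0]; split_ifs
    · exact le_refl 0
    · exact (Real.exp_pos _).le
  have hE01 : E0 ≤ 1 := by
    rw [hE0]; split_ifs
    · linarith
    · calc Real.exp (-T.toReal) ≤ Real.exp 0 :=
            Real.exp_le_exp.2 (neg_nonpos.2 ENNReal.toReal_nonneg)
        _ = 1 := Real.exp_zero
  have hB0 : (0:ℝ) ≤ 1 - c * E0 := by nlinarith
  have hNbd : ∀ N : ℕ, μ {ω | ∃ n, n ≤ N ∧ g n ≤ M n ω} ≤ ENNReal.ofReal (1 - c * E0) := by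
    intro N
    have hd := villeDiscrete hfm hgm hq hM hlb N
    push_cast at hd
    have hprodge := villeProdGe hf_mono hg_mono hf' h0' N
    rw [← hT, ← hE0] at hprodge
    have hPge : E0 ≤ villeP f g N 0 := by
      rw [villeP]
      simpa only [villeR] using hprodge
    have h1 : E0 / (g 0 + f 0) ≤ villeA f g N 0 := by
      have h2 := mul_le_mul_of_nonneg_right hPge (inv_nonneg.2 h0'.le)
      have h3 : villeA f g N 0 = villeP f g N 0 / (g ((0:ℕ):ℝ) + f ((0:ℕ):ℝ)) := rfl
      rw [h3]
      push_cast
      rw [div_eq_mul_inv, div_eq_mul_inv]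
      exact h2
    have hstep : 1 - villeA f g N 0 * (g 0 - ∫ ω, M 0 ω ∂μ) ≤ 1 - c * E0 := by
      have h2 : E0 / (g 0 + f 0) * (g 0 - ∫ ω, M 0 ω ∂μ) ≤
          villeA f g N 0 * (g 0 - ∫ ω, M 0 ω ∂μ) := mul_le_mul_of_nonneg_right h1 hEM
      have h3 : c * E0 = E0 / (g 0 + f 0) * (g 0 - ∫ ω, M 0 ω ∂μ) := by rw [hc]; ring
      linarith
    calc μ {ω | ∃ n, n ≤ N ∧ g n ≤ M n ω}
        = ENNReal.ofReal ((μ {ω | ∃ n, n ≤ N ∧ g n ≤ M n ω}).toReal) :=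
          (ENNReal.ofReal_toReal (measure_ne_top μ _)).symm
      _ ≤ ENNReal.ofReal (1 - c * E0) := ENNReal.ofReal_le_ofReal (le_trans hd hstep)
  have hU : {ω | ∃ n : ℕ, g n ≤ M n ω} = ⋃ N : ℕ, {ω | ∃ n : ℕ, n ≤ N ∧ g n ≤ M n ω} := by
    ext ω
    simp only [Set.mem_setOf_eq, Set.mem_iUnion]
    constructor
    · rintro ⟨n, hn⟩; exact ⟨n, n, le_rfl, hn⟩
    · rintro ⟨N, n, _, hn⟩; exact ⟨n, hn⟩
  have hmono : Monotone (fun N : ℕ => {ω | ∃ n : ℕ, n ≤ N ∧ g n ≤ M n ω}) := by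
    intro a b hab ω hω
    obtain ⟨n, hna, hn⟩ := hω
    exact ⟨n, hna.trans hab, hn⟩
  have hlim := tendsto_measure_iUnion_atTop (μ := μ) hmono
  have hle : μ {ω | ∃ n : ℕ, g n ≤ M n ω} ≤ ENNReal.ofReal (1 - c * E0) := by
    rw [hU]
    exact le_of_tendsto' hlim hNbd
  have hfin := ENNReal.toReal_mono ENNReal.ofReal_ne_top hle
  rw [ENNReal.toReal_ofReal hB0] at hfin
  exact hfin
end

section
/- Define I(x) = ∫_0^x e^{u²/2} · erf(u/√2) du. Let τ > 0 and let x be a real number with I(x) ≤ τ. Then |x| ≤ √(2·ln(1+√2·τ)) + R(τ), where R(τ) = [τ·(1 - √( (τ/(τ+2√2)) · (1/ln(1+√2·τ)) ))] / [ (1/(2·ln(1+√2·τ))) · ( (1+√2·τ)·(2·ln(1+√2·τ) - 1) + ln(1+√2·τ) + 1 ) · √(τ/(τ+2√2)) ]. -/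
open MeasureTheory Real

/-- The Gauss error function `erf z = (2/√π) ∫_0^z e^{-t²} dt`. -/
noncomputable def erf (z : ℝ) : ℝ := (2 / Real.sqrt π) * ∫ t in (0 : ℝ)..z, Real.exp (-t ^ 2)

/-- The function `I x = ∫_0^x e^{u²/2} erf(u/√2) du`. -/
noncomputable def I (x : ℝ) : ℝ :=
  ∫ u in (0 : ℝ)..x, Real.exp (u ^ 2 / 2) * erf (u / Real.sqrt 2)

namespace InvertIAux

noncomputable def F (z : ℝ) : ℝ := ∫ t in (0 : ℝ)..z, Real.exp (-t ^ 2)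

lemma contgauss : Continuous fun t : ℝ => Real.exp (-t ^ 2) := by continuity

lemma hF' (z : ℝ) : HasDerivAt F (Real.exp (-z ^ 2)) z :=
  (contgauss.integral_hasStrictDerivAt 0 z).hasDerivAt

lemma contF : Continuous F := by
  have h : Differentiable ℝ F := fun z => (hF' z).differentiableAt
  exact h.continuous

lemma F_zero : F 0 = 0 := intervalIntegral.integral_same

lemma F_nonneg {z : ℝ} (hz : 0 ≤ z) : 0 ≤ F z :=
  intervalIntegral.integral_nonneg hz (fun u _ => (Real.exp_pos _).le)

lemma F_mono : Monotone F := by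
  intro z₁ z₂ h
  have hadd := intervalIntegral.integral_add_adjacent_intervals (μ := volume)
    (contgauss.intervalIntegrable 0 z₁) (contgauss.intervalIntegrable z₁ z₂)
  have hnn : 0 ≤ ∫ t in z₁..z₂, Real.exp (-t ^ 2) :=
    intervalIntegral.integral_nonneg h (fun u _ => (Real.exp_pos _).le)
  have : F z₂ = F z₁ + ∫ t in z₁..z₂, Real.exp (-t ^ 2) := by
    rw [F, F, ← hadd]
  linarith

lemma Ftop : Filter.Tendsto F Filter.atTop (nhds (Real.sqrt π / 2)) := by
  have hint : IntegrableOn (fun t : ℝ => Real.exp (-t ^ 2)) (Set.Ioi 0) := by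
    have := (integrable_exp_neg_mul_sq (one_pos)).integrableOn (s := Set.Ioi (0:ℝ))
    simpa using this
  have h := MeasureTheory.intervalIntegral_tendsto_integral_Ioi 0 hint Filter.tendsto_id
  have hval : (∫ t in Set.Ioi (0:ℝ), Real.exp (-t ^ 2)) = Real.sqrt π / 2 := by
    have := integral_gaussian_Ioi 1
    simpa using this
  rw [hval] at h
  exact h

noncomputable def phi (z : ℝ) : ℝ := F z - π / 4 * z

lemma hphi' (z : ℝ) : HasDerivAt phi (Real.exp (-z ^ 2) - π / 4) z := by
  have h2 : HasDerivAt (fun z : ℝ => π / 4 * z) (π / 4) z := by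
    simpa using (hasDerivAt_id z).const_mul (π / 4)
  exact (hF' z).sub h2

lemma phi_zero : phi 0 = 0 := by simp [phi, F_zero]

lemma phi_neg_persist {w v : ℝ} (hw : 0 ≤ w) (hwv : w ≤ v) (h : phi w < 0) : phi v < 0 := by
  by_cases hc : Real.exp (-w ^ 2) ≤ π / 4
  · have hanti : AntitoneOn phi (Set.Ici w) := by
      apply antitoneOn_of_deriv_nonpos (convex_Ici w)
      · exact fun u _ => (hphi' u).differentiableAt.continuousAt.continuousWithinAt
      · exact fun u _ => (hphi' u).differentiableAt.differentiableWithinAt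
      · intro u hu
        rw [interior_Ici] at hu
        rw [(hphi' u).deriv]
        have hu' : w ≤ u := le_of_lt hu
        have hee : Real.exp (-u ^ 2) ≤ Real.exp (-w ^ 2) := by
          apply Real.exp_le_exp.mpr
          nlinarith
        linarith
    have := hanti (Set.mem_Ici.mpr (le_refl w)) (Set.mem_Ici.mpr hwv) hwv
    linarith
  · push_neg at hc
    rcases eq_or_lt_of_le hw with hw0 | hw0
    · rw [← hw0, phi_zero] at h; linarith
    have hmono : StrictMonoOn phi (Set.Icc 0 w) := by
      apply strictMonoOn_of_deriv_pos (convex_Icc 0 w)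
      · exact fun u _ => (hphi' u).differentiableAt.continuousAt.continuousWithinAt
      · intro u hu
        rw [interior_Icc] at hu
        rw [(hphi' u).deriv]
        have : Real.exp (-w ^ 2) ≤ Real.exp (-u ^ 2) := by
          apply Real.exp_le_exp.mpr
          nlinarith [hu.1, hu.2]
        linarith
    have := hmono (Set.mem_Icc.mpr ⟨le_refl 0, hw⟩) (Set.mem_Icc.mpr ⟨hw, le_refl w⟩) hw0
    rw [phi_zero] at this
    linarith

noncomputable def kfun (z : ℝ) : ℝ := F z ^ 2 - π / 4 * (1 - Real.exp (-z ^ 2))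

lemma hk' (z : ℝ) : HasDerivAt kfun (2 * Real.exp (-z ^ 2) * phi z) z := by
  have h1 : HasDerivAt (fun z : ℝ => F z ^ 2) ((2 : ℕ) * F z ^ 1 * Real.exp (-z ^ 2)) z :=
    (hF' z).pow 2
  have h2 : HasDerivAt (fun z : ℝ => -z ^ 2) (-(↑2 * z ^ 1)) z := (hasDerivAt_pow 2 z).neg
  have h3 : HasDerivAt (fun z : ℝ => Real.exp (-z ^ 2)) (Real.exp (-z ^ 2) * -(↑2 * z ^ 1)) z :=
    h2.exp
  have h4 : HasDerivAt (fun z : ℝ => π / 4 * (1 - Real.exp (-z ^ 2)))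
      (π / 4 * (0 - Real.exp (-z ^ 2) * -(↑2 * z ^ 1))) z :=
    ((hasDerivAt_const z (1:ℝ)).sub h3).const_mul (π / 4)
  have h5 := h1.sub h4
  refine h5.congr_deriv ?_
  unfold phi
  push_cast
  ring

lemma kfun_zero : kfun 0 = 0 := by simp [kfun, F_zero]

lemma ktop : Filter.Tendsto kfun Filter.atTop (nhds 0) := by
  have h1 : Filter.Tendsto (fun z : ℝ => F z ^ 2) Filter.atTop (nhds ((Real.sqrt π / 2) ^ 2)) :=
    Ftop.pow 2
  have h2 : Filter.Tendsto (fun z : ℝ => Real.exp (-z ^ 2)) Filter.atTop (nhds 0) := by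
    apply Real.tendsto_exp_atBot.comp
    have h0 : Filter.Tendsto (fun z : ℝ => z ^ 2) Filter.atTop Filter.atTop :=
      Filter.tendsto_pow_atTop two_ne_zero
    simpa [Function.comp_def] using Filter.tendsto_neg_atTop_atBot.comp h0
  have h3 : Filter.Tendsto kfun Filter.atTop
      (nhds ((Real.sqrt π / 2) ^ 2 - π / 4 * (1 - 0))) := by
    exact h1.sub (((tendsto_const_nhds).sub h2).const_mul (π / 4))
  have hval : (Real.sqrt π / 2) ^ 2 - π / 4 * (1 - 0) = 0 := by
    rw [div_pow, sq_sqrt pi_pos.le]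
    ring
  rwa [hval] at h3

lemma kfun_nonneg {z : ℝ} (hz : 0 ≤ z) : 0 ≤ kfun z := by
  by_contra hneg
  push_neg at hneg
  rcases eq_or_lt_of_le hz with hz0 | hz0
  · rw [← hz0, kfun_zero] at hneg; linarith
  -- MVT to find c with phi c < 0
  have hcont : ContinuousOn kfun (Set.Icc 0 z) :=
    fun u _ => (hk' u).differentiableAt.continuousAt.continuousWithinAt
  obtain ⟨c, hc, hceq⟩ := exists_hasDerivAt_eq_slope kfun
    (fun u => 2 * Real.exp (-u ^ 2) * phi u) hz0 hcont (fun u _ => hk' u)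
  have hslope : (kfun z - kfun 0) / (z - 0) < 0 := by
    rw [kfun_zero]
    apply div_neg_of_neg_of_pos <;> linarith
  have hder : 2 * Real.exp (-c ^ 2) * phi c < 0 := by rw [hceq]; exact hslope
  have hphic : phi c < 0 := by
    by_contra hp
    push_neg at hp
    have : 0 ≤ 2 * Real.exp (-c ^ 2) * phi c := by positivity
    linarith
  have hc0 : 0 ≤ c := le_of_lt hc.1
  -- kfun antitone on Ici c
  have hanti : AntitoneOn kfun (Set.Ici c) := by
    apply antitoneOn_of_deriv_nonpos (convex_Ici c)
    · exact fun u _ => (hk' u).differentiableAt.continuousAt.continuousWithinAt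
    · exact fun u _ => (hk' u).differentiableAt.differentiableWithinAt
    · intro u hu
      rw [interior_Ici] at hu
      rw [(hk' u).deriv]
      have : phi u < 0 := phi_neg_persist hc0 (le_of_lt hu) hphic
      have he : 0 < Real.exp (-u ^ 2) := Real.exp_pos _
      nlinarith
  have hev : ∀ᶠ v in Filter.atTop, kfun v ≤ kfun z := by
    filter_upwards [Filter.eventually_ge_atTop z] with v hv
    exact hanti (Set.mem_Ici.mpr hc.2.le) (Set.mem_Ici.mpr (le_trans hc.2.le hv)) hv
  have := le_of_tendsto ktop hev
  linarith

lemma erf_eq (z : ℝ) : erf z = 2 / Real.sqrt π * F z := rfl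

lemma erf_nonneg {z : ℝ} (hz : 0 ≤ z) : 0 ≤ erf z := by
  rw [erf_eq]
  have := F_nonneg hz
  positivity

lemma erf_mono : Monotone erf := by
  intro a b h
  rw [erf_eq, erf_eq]
  apply mul_le_mul_of_nonneg_left (F_mono h)
  positivity

lemma erf_sq {z : ℝ} (hz : 0 ≤ z) : 1 - Real.exp (-z ^ 2) ≤ erf z ^ 2 := by
  have hk := kfun_nonneg hz
  have hπ : (0:ℝ) < π := pi_pos
  have h1 : π / 4 * (1 - Real.exp (-z ^ 2)) ≤ F z ^ 2 := by
    unfold kfun at hk; linarith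
  have h2 : erf z ^ 2 = 4 / π * F z ^ 2 := by
    rw [erf_eq, mul_pow, div_pow, sq_sqrt hπ.le]
    ring
  rw [h2]
  have h3 : 4 / π * (π / 4 * (1 - Real.exp (-z ^ 2))) ≤ 4 / π * F z ^ 2 :=
    mul_le_mul_of_nonneg_left h1 (by positivity)
  have h4 : 4 / π * (π / 4 * (1 - Real.exp (-z ^ 2))) = 1 - Real.exp (-z ^ 2) := by
    field_simp
  linarith

lemma erf_star {c w : ℝ} (hc0 : 0 ≤ c) (hc1 : c ≤ 1) (hw : 0 ≤ w) :
    c * erf w ≤ erf (c * w) := by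
  rcases eq_or_lt_of_le hc0 with hc | hc
  · simp [← hc, erf_eq, F_zero]
  have hkey : ∫ t in (0:ℝ)..(c * w), Real.exp (-t ^ 2)
      = c * ∫ t in (0:ℝ)..w, Real.exp (-(c * t) ^ 2) := by
    have := intervalIntegral.integral_comp_mul_left
      (fun t => Real.exp (-t ^ 2)) (a := (0:ℝ)) (b := w) hc.ne'
    rw [this, smul_eq_mul, mul_zero]
    field_simp
  have hmono : (∫ t in (0:ℝ)..w, Real.exp (-t ^ 2))
      ≤ ∫ t in (0:ℝ)..w, Real.exp (-(c * t) ^ 2) := by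
    apply intervalIntegral.integral_mono_on hw
      (contgauss.intervalIntegrable 0 w)
      ((contgauss.comp (continuous_const.mul continuous_id)).intervalIntegrable 0 w)
    intro t ht
    show Real.exp (-t ^ 2) ≤ Real.exp (-(c * t) ^ 2)
    apply Real.exp_le_exp.mpr
    have hcc : c ^ 2 ≤ 1 := by nlinarith
    have h1 : (c * t) ^ 2 ≤ t ^ 2 := by nlinarith [sq_nonneg t]
    linarith
  rw [erf_eq, erf_eq, F, F, hkey]
  have h2 : (0:ℝ) ≤ 2 / Real.sqrt π := by positivity
  have h3 := mul_le_mul_of_nonneg_left (mul_le_mul_of_nonneg_left hmono hc0) h2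
  calc c * (2 / Real.sqrt π * ∫ t in (0:ℝ)..w, Real.exp (-t ^ 2))
      = 2 / Real.sqrt π * (c * ∫ t in (0:ℝ)..w, Real.exp (-t ^ 2)) := by ring
    _ ≤ 2 / Real.sqrt π * (c * ∫ t in (0:ℝ)..w, Real.exp (-(c * t) ^ 2)) := h3

lemma cont_erf : Continuous erf :=
  continuous_const.mul contF

noncomputable def g (u : ℝ) : ℝ := Real.exp (u ^ 2 / 2) * erf (u / Real.sqrt 2)

lemma cont_g : Continuous g := by
  unfold g
  apply Continuous.mul
  · apply Real.continuous_exp.comp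
    continuity
  · exact cont_erf.comp (continuous_id.div_const _)

lemma I_eq (x : ℝ) : I x = ∫ u in (0:ℝ)..x, g u := rfl

lemma F_neg (v : ℝ) : F (-v) = - F v := by
  have h := intervalIntegral.integral_comp_neg (a := (0:ℝ)) (b := v)
    (fun t => Real.exp (-t ^ 2))
  simp only [neg_zero, neg_sq] at h
  have h2 : (∫ x in (-v)..(0:ℝ), Real.exp (-x ^ 2)) = -∫ x in (0:ℝ)..(-v), Real.exp (-x ^ 2) :=
    intervalIntegral.integral_symm 0 (-v)
  rw [F, F]
  linarith [h, h2]

lemma erf_neg (v : ℝ) : erf (-v) = - erf v := by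
  rw [erf_eq, erf_eq, F_neg]
  ring

lemma g_odd (u : ℝ) : g (-u) = -g u := by
  unfold g
  have h1 : (-u) ^ 2 = u ^ 2 := by ring
  rw [h1, neg_div, erf_neg]
  ring

lemma I_even (x : ℝ) : I (-x) = I x := by
  rw [I_eq, I_eq]
  have h := intervalIntegral.integral_comp_neg (a := (0:ℝ)) (b := x) g
  simp only [neg_zero] at h
  have h2 : (∫ u in (0:ℝ)..x, g (-u)) = -∫ u in (0:ℝ)..x, g u := by
    simp only [g_odd]
    exact intervalIntegral.integral_neg
  have h3 : (∫ u in (-x)..(0:ℝ), g u) = -∫ u in (0:ℝ)..(-x), g u :=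
    intervalIntegral.integral_symm 0 (-x)
  linarith [h, h2, h3]

lemma g_nonneg {u : ℝ} (hu : 0 ≤ u) : 0 ≤ g u :=
  mul_nonneg (Real.exp_pos _).le (erf_nonneg (by positivity))

lemma g_mono {u v : ℝ} (hu : 0 ≤ u) (huv : u ≤ v) : g u ≤ g v := by
  unfold g
  apply mul_le_mul
  · exact Real.exp_le_exp.mpr (by nlinarith)
  · exact erf_mono (by gcongr)
  · exact erf_nonneg (by positivity)
  · exact (Real.exp_pos _).le

lemma I_lower1 {a y : ℝ} (ha : 0 ≤ a) (hay : a ≤ y) : I a + (y - a) * g a ≤ I y := by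
  have hadd := intervalIntegral.integral_add_adjacent_intervals (μ := volume)
    (cont_g.intervalIntegrable 0 a) (cont_g.intervalIntegrable a y)
  have h1 : (y - a) * g a = ∫ _ in a..y, g a := by
    rw [intervalIntegral.integral_const, smul_eq_mul]
  have h2 : (∫ _ in a..y, g a) ≤ ∫ u in a..y, g u := by
    apply intervalIntegral.integral_mono_on hay intervalIntegrable_const
      (cont_g.intervalIntegrable a y)
    exact fun u hu => g_mono ha hu.1
  have h3 : I y = I a + ∫ u in a..y, g u := by
    rw [I_eq, I_eq, ← hadd]
  linarith

lemma I_lower2 {a : ℝ} (ha : 0 < a) :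
    erf (a / Real.sqrt 2) * (Real.exp (a ^ 2 / 2) - 1) / a ≤ I a := by
  have hpt : ∀ u ∈ Set.Icc (0:ℝ) a,
      erf (a / Real.sqrt 2) / a * (u * Real.exp (u ^ 2 / 2)) ≤ g u := by
    intro u hu
    have hstar := erf_star (c := u / a) (w := a / Real.sqrt 2)
      (div_nonneg hu.1 ha.le) ((div_le_one ha).mpr hu.2) (by positivity)
    have hcw : u / a * (a / Real.sqrt 2) = u / Real.sqrt 2 := by
      field_simp
    rw [hcw] at hstar
    have hexp : (0:ℝ) < Real.exp (u ^ 2 / 2) := Real.exp_pos _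
    calc erf (a / Real.sqrt 2) / a * (u * Real.exp (u ^ 2 / 2))
        = Real.exp (u ^ 2 / 2) * (u / a * erf (a / Real.sqrt 2)) := by ring
      _ ≤ Real.exp (u ^ 2 / 2) * erf (u / Real.sqrt 2) :=
          mul_le_mul_of_nonneg_left hstar hexp.le
      _ = g u := rfl
  have hcont1 : Continuous fun u : ℝ => erf (a / Real.sqrt 2) / a * (u * Real.exp (u ^ 2 / 2)) := by
    continuity
  have hmono := intervalIntegral.integral_mono_on (μ := volume) ha.le
    (hcont1.intervalIntegrable 0 a) (cont_g.intervalIntegrable 0 a) hpt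
  have hderiv : ∀ u ∈ Set.uIcc (0:ℝ) a,
      HasDerivAt (fun v => Real.exp (v ^ 2 / 2)) (u * Real.exp (u ^ 2 / 2)) u := by
    intro u _
    have h1 : HasDerivAt (fun v : ℝ => v ^ 2 / 2) ((↑2 * u ^ 1) / 2) u :=
      (hasDerivAt_pow 2 u).div_const 2
    have h2 := h1.exp
    convert h2 using 1
    push_cast
    ring
  have hcont2 : Continuous fun u : ℝ => u * Real.exp (u ^ 2 / 2) := by continuity
  have hcalc : (∫ u in (0:ℝ)..a, u * Real.exp (u ^ 2 / 2)) = Real.exp (a ^ 2 / 2) - 1 := by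
    have := intervalIntegral.integral_eq_sub_of_hasDerivAt hderiv
      (hcont2.intervalIntegrable 0 a)
    simpa using this
  have heq : (∫ u in (0:ℝ)..a, erf (a / Real.sqrt 2) / a * (u * Real.exp (u ^ 2 / 2)))
      = erf (a / Real.sqrt 2) / a * (Real.exp (a ^ 2 / 2) - 1) := by
    rw [intervalIntegral.integral_const_mul, hcalc]
  rw [heq] at hmono
  rw [I_eq]
  calc erf (a / Real.sqrt 2) * (Real.exp (a ^ 2 / 2) - 1) / a
      = erf (a / Real.sqrt 2) / a * (Real.exp (a ^ 2 / 2) - 1) := by ring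
    _ ≤ ∫ u in (0:ℝ)..a, g u := hmono

end InvertIAux


open InvertIAux

set_option maxHeartbeats 1000000 in
/-- **Inversion of `I`** (Lemma 11): if `I x ≤ τ` for some `τ > 0`, then
`|x| ≤ √(2 ln(1 + √2 τ)) + R(τ)` with the explicit residual `R(τ)`. -/
theorem invert_I {τ x : ℝ} (hτ : 0 < τ) (hx : I x ≤ τ) :
    |x| ≤ Real.sqrt (2 * Real.log (1 + Real.sqrt 2 * τ)) +
      τ * (1 - Real.sqrt ((τ / (τ + 2 * Real.sqrt 2)) *
          (1 / Real.log (1 + Real.sqrt 2 * τ)))) /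
        ((1 / (2 * Real.log (1 + Real.sqrt 2 * τ))) *
          ((1 + Real.sqrt 2 * τ) * (2 * Real.log (1 + Real.sqrt 2 * τ) - 1) +
            Real.log (1 + Real.sqrt 2 * τ) + 1) *
          Real.sqrt (τ / (τ + 2 * Real.sqrt 2))) := by
  have h2 : (0:ℝ) < Real.sqrt 2 := Real.sqrt_pos.mpr (by norm_num)
  have h2sq : Real.sqrt 2 * Real.sqrt 2 = 2 := Real.mul_self_sqrt (by norm_num)
  set s := Real.sqrt 2 * τ with hs_def
  have hs : 0 < s := by positivity
  set L := Real.log (1 + s) with hL_def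
  have h1s : (1:ℝ) < 1 + s := by linarith
  have h1s0 : (0:ℝ) < 1 + s := by linarith
  have hL : 0 < L := Real.log_pos h1s
  have hLs : L ≤ s := by
    have := Real.log_le_sub_one_of_pos h1s0
    linarith
  have hLlb : s / (1 + s) ≤ L := by
    have h := Real.log_le_sub_one_of_pos (show (0:ℝ) < (1 + s)⁻¹ by positivity)
    rw [Real.log_inv] at h
    have hinv : (1 + s) * (1 + s)⁻¹ = 1 := mul_inv_cancel₀ h1s0.ne'
    rw [div_le_iff₀ h1s0]
    nlinarith [h, hinv]
  have hsL1 : s ≤ L * (1 + s) := (div_le_iff₀ h1s0).mp hLlb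
  set a := Real.sqrt (2 * L) with ha_def
  have ha : 0 < a := Real.sqrt_pos.mpr (by linarith)
  have ha2 : a ^ 2 = 2 * L := Real.sq_sqrt (by linarith)
  have hexpa : Real.exp (a ^ 2 / 2) = 1 + s := by
    rw [ha2]
    have he : 2 * L / 2 = L := by ring
    rw [he, hL_def, Real.exp_log h1s0]
  have hEq : τ / (τ + 2 * Real.sqrt 2) = s / (s + 4) := by
    rw [hs_def, div_eq_div_iff (by positivity) (by positivity)]
    nlinarith [h2sq, hτ, h2]
  rw [hEq]
  set E := Real.sqrt (s / (s + 4)) with hE_def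
  have hsdiv : 0 < s / (s + 4) := by positivity
  have hE : 0 < E := Real.sqrt_pos.mpr hsdiv
  have hE2 : E ^ 2 = s / (s + 4) := Real.sq_sqrt hsdiv.le
  have haL : (a / Real.sqrt 2) ^ 2 = L := by
    rw [div_pow, ha2, Real.sq_sqrt (by norm_num : (0:ℝ) ≤ 2)]
    ring
  have hA0 : 0 ≤ erf (a / Real.sqrt 2) := erf_nonneg (by positivity)
  have hAge : E ≤ erf (a / Real.sqrt 2) := by
    have h5 := erf_sq (z := a / Real.sqrt 2) (by positivity)
    rw [haL] at h5
    have hexpL : Real.exp (-L) = (1 + s)⁻¹ := by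
      rw [Real.exp_neg, hL_def, Real.exp_log h1s0]
    rw [hexpL] at h5
    have e1 : 1 - (1 + s)⁻¹ = s / (1 + s) := by field_simp; ring
    rw [e1] at h5
    have e2 : s / (s + 4) ≤ s / (1 + s) := by
      rw [div_le_div_iff₀ (by linarith) (by linarith)]
      nlinarith
    have h6 : s / (s + 4) ≤ erf (a / Real.sqrt 2) ^ 2 := by linarith
    calc E = Real.sqrt (s / (s + 4)) := rfl
      _ ≤ Real.sqrt (erf (a / Real.sqrt 2) ^ 2) := Real.sqrt_le_sqrt h6
      _ = erf (a / Real.sqrt 2) := Real.sqrt_sq hA0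
  have hA : 0 < erf (a / Real.sqrt 2) := lt_of_lt_of_le hE hAge
  have hEL : E ^ 2 ≤ L := by
    rw [hE2, div_le_iff₀ (by linarith)]
    nlinarith
  have hsqL : 0 < Real.sqrt L := Real.sqrt_pos.mpr hL
  have hEsL : E ≤ Real.sqrt L := by
    calc E = Real.sqrt (E ^ 2) := (Real.sqrt_sq hE.le).symm
      _ ≤ Real.sqrt L := Real.sqrt_le_sqrt hEL
  have hT : Real.sqrt (s / (s + 4) * (1 / L)) = E / Real.sqrt L := by
    rw [Real.sqrt_mul hsdiv.le, one_div, Real.sqrt_inv, ← hE_def, div_eq_mul_inv]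
  have hsqrt2a : a = Real.sqrt 2 * Real.sqrt L := by
    rw [ha_def, Real.sqrt_mul (by norm_num : (0:ℝ) ≤ 2)]
  set M := (1 + s) * (2 * L - 1) + L + 1 with hM_def
  have hMexp : M = 3 * L + 2 * (L * s) - s := by rw [hM_def]; ring
  have hsL1' : s ≤ L + L * s := by nlinarith [hsL1]
  have hMpos : 0 < M := by
    rw [hMexp]
    linarith [mul_pos hL hs]
  have hMle : M ≤ (1 + s) * (2 * L) := by
    have hexp2 : (1 + s) * (2 * L) = 2 * L + 2 * (L * s) := by ring
    rw [hMexp, hexp2]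
    linarith
  have hdenpos : 0 < 1 / (2 * L) * M * E :=
    mul_pos (mul_pos (by positivity) hMpos) hE
  have hNnum : 0 ≤ τ * (1 - E / Real.sqrt L) := by
    have : E / Real.sqrt L ≤ 1 := (div_le_one hsqL).mpr hEsL
    have h0 : 0 ≤ 1 - E / Real.sqrt L := by linarith
    positivity
  have hIy : I |x| ≤ τ := by
    rcases le_total 0 x with hx0 | hx0
    · rwa [abs_of_nonneg hx0]
    · rw [abs_of_nonpos hx0, I_even]
      exact hx
  rw [hT]
  rcases le_or_gt |x| a with hya | hya
  · have hR : 0 ≤ τ * (1 - E / Real.sqrt L) / (1 / (2 * L) * M * E) :=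
      div_nonneg hNnum hdenpos.le
    linarith
  · have k1 := I_lower1 (a := a) (y := |x|) ha.le hya.le
    have k2 := I_lower2 (a := a) ha
    have hga : g a = (1 + s) * erf (a / Real.sqrt 2) := by
      rw [g, hexpa]
    rw [hga] at k1
    have hsm1 : Real.exp (a ^ 2 / 2) - 1 = s := by rw [hexpa]; ring
    rw [hsm1] at k2
    have hEs : τ * (E / Real.sqrt L) = s * E / a := by
      rw [hsqrt2a, hs_def]
      field_simp
    have hsa : 0 < s / a := div_pos hs ha
    have h1 : E * (s / a) ≤ erf (a / Real.sqrt 2) * (s / a) :=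
      mul_le_mul_of_nonneg_right hAge hsa.le
    have hstep2 : (|x| - a) * ((1 + s) * erf (a / Real.sqrt 2))
        ≤ τ * (1 - E / Real.sqrt L) := by
      have e3 : erf (a / Real.sqrt 2) * s / a = erf (a / Real.sqrt 2) * (s / a) := by ring
      have e4 : s * E / a = E * (s / a) := by ring
      have e5 : τ * (1 - E / Real.sqrt L) = τ - τ * (E / Real.sqrt L) := by ring
      rw [e5, hEs, e4]
      rw [e3] at k2
      linarith [k1, k2, h1, hIy]
    have hfin : |x| - a ≤ τ * (1 - E / Real.sqrt L) / ((1 + s) * erf (a / Real.sqrt 2)) :=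
      (le_div_iff₀ (by positivity)).mpr hstep2
    have hden_le : 1 / (2 * L) * M * E ≤ (1 + s) * erf (a / Real.sqrt 2) := by
      have hd1 : 1 / (2 * L) * M ≤ 1 + s := by
        rw [div_mul_eq_mul_div, one_mul, div_le_iff₀ (by linarith)]
        linarith
      calc 1 / (2 * L) * M * E ≤ (1 + s) * E :=
            mul_le_mul_of_nonneg_right hd1 hE.le
        _ ≤ (1 + s) * erf (a / Real.sqrt 2) :=
            mul_le_mul_of_nonneg_left hAge (by positivity)
    have hfin2 : τ * (1 - E / Real.sqrt L) / ((1 + s) * erf (a / Real.sqrt 2))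
        ≤ τ * (1 - E / Real.sqrt L) / (1 / (2 * L) * M * E) := by
      gcongr
    linarith
end

section
/- Fix 0 < d ≤ 1. Let f(x) = (1/√(2π))·ln(1+x), u(x) = (1/d)·(e + x)·ln²(e + x), and g(x) = u(f(x)) - f(x), all for x ≥ 0. Then: (i) g(x) ≥ f(x) for all x ≥ 0; (ii) g is increasing on [0,∞); and (iii) ∫_0^∞ f'(x)/(f(x) + g(x)) dx = d. -/
open MeasureTheory Real

/-- **Choice of threshold for the LIL** (Lemma 12): with
`f x = ln(1+x)/√(2π)`, `u x = (1/d)(e+x) ln²(e+x)` and `g = u ∘ f - f`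
for `0 < d ≤ 1`: (i) `g ≥ f` on `[0,∞)`; (ii) `g` is increasing on `[0,∞)`;
(iii) `∫_0^∞ f'(x)/(f x + g x) dx = d`. -/
theorem lil_threshold_choice {d : ℝ} (hd : 0 < d) (hd1 : d ≤ 1)
    (f u g : ℝ → ℝ)
    (hf : ∀ x, f x = (1 / Real.sqrt (2 * π)) * Real.log (1 + x))
    (hu : ∀ x, u x = (1 / d) * (Real.exp 1 + x) * (Real.log (Real.exp 1 + x)) ^ 2)
    (hg : ∀ x, g x = u (f x) - f x) :
    (∀ x, 0 ≤ x → f x ≤ g x) ∧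
    StrictMonoOn g (Set.Ici 0) ∧
    ∫ x in Set.Ioi (0 : ℝ), deriv f x / (f x + g x) = d := by
  have hc : (0:ℝ) < 1 / Real.sqrt (2 * π) := by positivity
  set c : ℝ := 1 / Real.sqrt (2 * π) with hcdef
  have he : (0:ℝ) < Real.exp 1 := Real.exp_pos 1
  have hdinv : (1:ℝ) ≤ 1 / d := by rw [le_div_iff₀ hd]; linarith
  -- basic facts about L y := log (e + y)
  have hL : ∀ y : ℝ, 0 ≤ y → 1 ≤ Real.log (Real.exp 1 + y) := by
    intro y hy
    calc (1:ℝ) = Real.log (Real.exp 1) := (Real.log_exp 1).symm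
      _ ≤ Real.log (Real.exp 1 + y) := by
          apply Real.log_le_log (by positivity); linarith
  -- key inequality for part (i)
  have key1 : ∀ y : ℝ, 0 ≤ y →
      2 * y ≤ (Real.exp 1 + y) * Real.log (Real.exp 1 + y) ^ 2 := by
    intro y hy
    have hL1 := hL y hy
    rcases le_or_gt y (Real.exp 1) with h | h
    · nlinarith [mul_le_mul_of_nonneg_left (show (1:ℝ) ≤ Real.log (Real.exp 1 + y) ^ 2 by nlinarith)
        (show (0:ℝ) ≤ Real.exp 1 + y by linarith)]
    · have h2 : Real.log 2 + 1 ≤ Real.log (Real.exp 1 + y) := by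
        have : Real.log (2 * Real.exp 1) ≤ Real.log (Real.exp 1 + y) := by
          apply Real.log_le_log (by positivity); linarith
        rwa [Real.log_mul (by norm_num) (ne_of_gt he), Real.log_exp] at this
      have hlog2 : (0.6931471803 : ℝ) < Real.log 2 := Real.log_two_gt_d9
      have hsq : (2:ℝ) ≤ Real.log (Real.exp 1 + y) ^ 2 := by nlinarith
      nlinarith [mul_le_mul_of_nonneg_left hsq (show (0:ℝ) ≤ Real.exp 1 + y by linarith)]
  -- monotonicity inequality on y-level
  have key2 : ∀ y₁ y₂ : ℝ, 0 ≤ y₁ → y₁ < y₂ →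
      (1 / d) * (Real.exp 1 + y₁) * Real.log (Real.exp 1 + y₁) ^ 2 - y₁ <
      (1 / d) * (Real.exp 1 + y₂) * Real.log (Real.exp 1 + y₂) ^ 2 - y₂ := by
    intro y₁ y₂ h1 h12
    have hL1 := hL y₁ h1
    have hL2 := hL y₂ (by linarith)
    have hLlt : Real.log (Real.exp 1 + y₁) < Real.log (Real.exp 1 + y₂) :=
      Real.log_lt_log (by positivity) (by linarith)
    have hΔ : (Real.exp 1 + y₁) * Real.log (Real.exp 1 + y₁) ^ 2 + (y₂ - y₁) <
        (Real.exp 1 + y₂) * Real.log (Real.exp 1 + y₂) ^ 2 := by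
      nlinarith [mul_pos (show (0:ℝ) < Real.exp 1 + y₁ by linarith)
        (show (0:ℝ) < Real.log (Real.exp 1 + y₂) ^ 2 - Real.log (Real.exp 1 + y₁) ^ 2 by nlinarith),
        mul_le_mul_of_nonneg_left (show (1:ℝ) ≤ Real.log (Real.exp 1 + y₂) ^ 2 by nlinarith)
          (show (0:ℝ) ≤ y₂ - y₁ by linarith)]
    have hpos : (0:ℝ) ≤ (Real.exp 1 + y₂) * Real.log (Real.exp 1 + y₂) ^ 2 -
        (Real.exp 1 + y₁) * Real.log (Real.exp 1 + y₁) ^ 2 := by linarith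
    nlinarith [mul_le_mul_of_nonneg_right hdinv hpos]
  -- substitute everything
  have hg' : g = fun x => u (f x) - f x := funext hg
  subst hg'
  have hu' : u = fun x => (1/d) * (Real.exp 1 + x) * (Real.log (Real.exp 1 + x)) ^ 2 := funext hu
  subst hu'
  have hf' : f = fun x => c * Real.log (1 + x) := funext hf
  subst hf'
  have hfnn : ∀ x : ℝ, 0 ≤ x → 0 ≤ c * Real.log (1 + x) := by
    intro x hx
    have : (0:ℝ) ≤ Real.log (1 + x) := Real.log_nonneg (by linarith)
    positivity
  refine ⟨?_, ?_, ?_⟩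
  · -- part (i)
    intro x hx
    have hy := hfnn x hx
    have := key1 _ hy
    simp only
    nlinarith [mul_le_mul_of_nonneg_right hdinv (mul_nonneg (by linarith : (0:ℝ) ≤ Real.exp 1 + c * Real.log (1+x)) (sq_nonneg (Real.log (Real.exp 1 + c * Real.log (1+x)))))]
  · -- part (ii)
    intro a ha b hb hab
    have ha' : (0:ℝ) ≤ a := ha
    simp only
    have hyab : c * Real.log (1 + a) < c * Real.log (1 + b) := by
      have := Real.log_lt_log (by linarith : (0:ℝ) < 1 + a) (by linarith : 1 + a < 1 + b)
      nlinarith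
    exact key2 _ _ (hfnn a ha') hyab
  · -- part (iii)
    set φ : ℝ → ℝ := fun x => Real.log (Real.exp 1 + c * Real.log (1 + x)) with hφdef
    set H : ℝ → ℝ := fun x => -d / φ x with hHdef
    have hφpos : ∀ x : ℝ, 0 ≤ x → 1 ≤ φ x := fun x hx => hL _ (hfnn x hx)
    have hden : ∀ x : ℝ, 0 ≤ x → 0 < Real.exp 1 + c * Real.log (1 + x) := by
      intro x hx; have := hfnn x hx; linarith
    have hder : ∀ x : ℝ, 0 ≤ x →
        HasDerivAt H (d * (c * (1/(1+x))) / ((Real.exp 1 + c * Real.log (1+x)) * φ x ^ 2)) x := by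
      intro x hx
      have hx1 : (0:ℝ) < 1 + x := by linarith
      have h1 : HasDerivAt (fun x : ℝ => 1 + x) 1 x := by
        simpa using (hasDerivAt_id x).const_add 1
      have h2 : HasDerivAt (fun x : ℝ => Real.log (1 + x)) (1/(1+x)) x := by
        simpa using h1.log (ne_of_gt hx1)
      have h3 := h2.const_mul c
      have h4 : HasDerivAt (fun x : ℝ => Real.exp 1 + c * Real.log (1 + x))
          (c * (1/(1+x))) x := h3.const_add (Real.exp 1)
      have h5 : HasDerivAt φ ((c * (1/(1+x))) / (Real.exp 1 + c * Real.log (1+x))) x := by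
        simpa using h4.log (ne_of_gt (hden x hx))
      have h6 := (hasDerivAt_const x (-d)).div h5 (by have := hφpos x hx; linarith)
      convert (show HasDerivAt H _ x from h6) using 1
      have hφne : φ x ≠ 0 := by have := hφpos x hx; linarith
      have hdenne : Real.exp 1 + c * Real.log (1+x) ≠ 0 := ne_of_gt (hden x hx)
      field_simp
      ring
    have hderiv : ∀ x ∈ Set.Ici (0:ℝ), HasDerivAt H
        ((fun x => d * (c * (1/(1+x))) / ((Real.exp 1 + c * Real.log (1+x)) * φ x ^ 2)) x) x :=
      fun x hx => hder x hx
    have hpos : ∀ x ∈ Set.Ioi (0:ℝ),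
        0 ≤ (fun x => d * (c * (1/(1+x))) / ((Real.exp 1 + c * Real.log (1+x)) * φ x ^ 2)) x := by
      intro x hx
      have hx' : (0:ℝ) ≤ x := le_of_lt hx
      have h1 := hden x hx'
      have h2 := hφpos x hx'
      have hx1 : (0:ℝ) < 1 + x := by linarith [hx.out]
      positivity
    have htend : Filter.Tendsto H Filter.atTop (nhds 0) := by
      have hφtop : Filter.Tendsto φ Filter.atTop Filter.atTop := by
        apply Real.tendsto_log_atTop.comp
        apply Filter.tendsto_atTop_add_const_left
        apply Filter.Tendsto.const_mul_atTop hc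
        apply Real.tendsto_log_atTop.comp
        apply Filter.tendsto_atTop_add_const_left
        exact Filter.tendsto_id
      exact Filter.Tendsto.div_atTop tendsto_const_nhds hφtop
    have hint := integral_Ioi_of_hasDerivAt_of_nonneg' hderiv hpos htend
    have hH0 : H 0 = -d := by
      simp [hHdef, hφdef, Real.log_one, Real.log_exp]
    rw [hH0] at hint
    have hcongr : ∀ x ∈ Set.Ioi (0:ℝ),
        deriv (fun x => c * Real.log (1 + x)) x /
          ((fun x => c * Real.log (1 + x)) x +
            ((fun x => (1/d) * (Real.exp 1 + x) * (Real.log (Real.exp 1 + x)) ^ 2)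
              ((fun x => c * Real.log (1 + x)) x) - (fun x => c * Real.log (1 + x)) x)) =
        d * (c * (1/(1+x))) / ((Real.exp 1 + c * Real.log (1+x)) * φ x ^ 2) := by
      intro x hx
      have hx' : (0:ℝ) ≤ x := le_of_lt hx
      have hx1 : (0:ℝ) < 1 + x := by linarith [hx.out]
      have h1 : HasDerivAt (fun x : ℝ => 1 + x) 1 x := by
        simpa using (hasDerivAt_id x).const_add 1
      have h2 : HasDerivAt (fun x : ℝ => Real.log (1 + x)) (1/(1+x)) x := by
        simpa using h1.log (ne_of_gt hx1)
      have h3 := (h2.const_mul c).deriv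
      simp only
      rw [h3]
      have hdenne : Real.exp 1 + c * Real.log (1+x) ≠ 0 := ne_of_gt (hden x hx')
      have hφne : φ x ≠ 0 := by have := hφpos x hx'; linarith
      simp only [hφdef]
      rw [show c * Real.log (1+x) + (1/d * (Real.exp 1 + c * Real.log (1+x)) *
            Real.log (Real.exp 1 + c * Real.log (1+x)) ^ 2 - c * Real.log (1+x)) =
          ((Real.exp 1 + c * Real.log (1+x)) * Real.log (Real.exp 1 + c * Real.log (1+x)) ^ 2) / d
        from by ring]
      rw [div_div_eq_mul_div]
      ring
    calc ∫ x in Set.Ioi (0:ℝ), deriv (fun x => c * Real.log (1 + x)) x /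
          ((fun x => c * Real.log (1 + x)) x +
            ((fun x => (1/d) * (Real.exp 1 + x) * (Real.log (Real.exp 1 + x)) ^ 2)
              ((fun x => c * Real.log (1 + x)) x) - (fun x => c * Real.log (1 + x)) x))
        = ∫ x in Set.Ioi (0:ℝ),
            d * (c * (1/(1+x))) / ((Real.exp 1 + c * Real.log (1+x)) * φ x ^ 2) := by
          apply setIntegral_congr_fun measurableSet_Ioi
          intro x hx
          exact hcongr x hx
      _ = 0 - -d := hint
      _ = d := by ring
end

section
/- Define I(x) = ∫_0^x e^{u²/2} · erf(u/√2) du and ℓ(x) = √( (e^{x²/2} - 1)³ / (x²·e^{x²/2}) ) for x ≠ 0 (with ℓ(0) = 0). Then I(x) ≥ ℓ(x) for all real x ≥ 0. -/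
open MeasureTheory Real

open Filter

section ErfAux

noncomputable def G (z : ℝ) : ℝ := ∫ t in (0:ℝ)..z, Real.exp (-t ^ 2)

lemma contG : Continuous G := by
  refine intervalIntegral.continuous_primitive (fun a b => ?_) 0
  exact (Real.continuous_exp.comp (by continuity)).intervalIntegrable a b

lemma hasDerivG (z : ℝ) : HasDerivAt G (Real.exp (-z ^ 2)) z := by
  refine intervalIntegral.integral_hasDerivAt_right
    ((Real.continuous_exp.comp (by continuity)).intervalIntegrable 0 z)
    ((Real.continuous_exp.comp (by continuity)).stronglyMeasurable.stronglyMeasurableAtFilter)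
    ((Real.continuous_exp.comp (by continuity)).continuousAt)

lemma tendstoG : Tendsto G atTop (nhds (Real.sqrt π / 2)) := by
  have h : IntegrableOn (fun t : ℝ => Real.exp (-t ^ 2)) (Set.Ioi 0) := by
    have := (integrable_exp_neg_mul_sq (by norm_num : (0:ℝ) < 1)).integrableOn (s := Set.Ioi 0)
    simpa using this
  have := intervalIntegral_tendsto_integral_Ioi 0 h tendsto_id
  have h2 : ∫ t in Set.Ioi (0:ℝ), Real.exp (-t ^ 2) = Real.sqrt π / 2 := by
    have := integral_gaussian_Ioi 1
    simpa using this
  rw [h2] at this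
  exact this

noncomputable def EE (z : ℝ) : ℝ := (4 / π) * G z - z

lemma hasDerivEE (z : ℝ) : HasDerivAt EE ((4 / π) * Real.exp (-z ^ 2) - 1) z :=
  ((hasDerivG z).const_mul (4 / π)).sub (hasDerivAt_id z)

lemma G_zero : G 0 = 0 := intervalIntegral.integral_same

lemma EE_zero : EE 0 = 0 := by simp [EE, G_zero]

noncomputable def z₀ : ℝ := Real.sqrt (Real.log (4 / π))

lemma log_pos' : 0 < Real.log (4 / π) := by
  have : (1:ℝ) < 4 / π := by
    rw [lt_div_iff₀ Real.pi_pos]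
    nlinarith [Real.pi_lt_d2]
  exact Real.log_pos this

lemma z₀_pos : 0 < z₀ := Real.sqrt_pos.2 log_pos'

lemma EE_deriv_nonneg {z : ℝ} (h0 : 0 ≤ z) (h1 : z ≤ z₀) :
    0 ≤ (4 / π) * Real.exp (-z ^ 2) - 1 := by
  have hz2 : z ^ 2 ≤ Real.log (4 / π) := by
    have h := pow_le_pow_left₀ h0 h1 2
    rwa [show z₀ ^ 2 = Real.log (4 / π) from Real.sq_sqrt (le_of_lt log_pos')] at h
  have : Real.exp (-z ^ 2) ≥ Real.exp (- Real.log (4 / π)) := Real.exp_le_exp.2 (by linarith)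
  have h4 : Real.exp (- Real.log (4 / π)) = π / 4 := by
    rw [Real.exp_neg, Real.exp_log (by positivity)]
    rw [inv_div]
  have hπ : 0 < π := Real.pi_pos
  rw [h4] at this
  have : (4 / π) * Real.exp (-z ^ 2) ≥ (4 / π) * (π / 4) := by
    apply mul_le_mul_of_nonneg_left this (by positivity)
  have h44 : (4 / π) * (π / 4) = 1 := by field_simp
  linarith [h44 ▸ this]

lemma EE_deriv_nonpos {z : ℝ} (h1 : z₀ ≤ z) :
    (4 / π) * Real.exp (-z ^ 2) - 1 ≤ 0 := by
  have hz2 : Real.log (4 / π) ≤ z ^ 2 := by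
    have h := pow_le_pow_left₀ (le_of_lt z₀_pos) h1 2
    rwa [show z₀ ^ 2 = Real.log (4 / π) from Real.sq_sqrt (le_of_lt log_pos')] at h
  have h5 : Real.exp (-z ^ 2) ≤ Real.exp (- Real.log (4 / π)) := Real.exp_le_exp.2 (by linarith)
  have h4 : Real.exp (- Real.log (4 / π)) = π / 4 := by
    rw [Real.exp_neg, Real.exp_log (by positivity)]
    rw [inv_div]
  have hπ : 0 < π := Real.pi_pos
  rw [h4] at h5
  have : (4 / π) * Real.exp (-z ^ 2) ≤ (4 / π) * (π / 4) :=
    mul_le_mul_of_nonneg_left h5 (by positivity)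
  have h44 : (4 / π) * (π / 4) = 1 := by field_simp
  linarith [h44 ▸ this]

lemma EE_mono : MonotoneOn EE (Set.Icc 0 z₀) := by
  apply monotoneOn_of_deriv_nonneg (convex_Icc _ _)
  · exact fun z _ => ((hasDerivEE z).continuousAt).continuousWithinAt
  · exact fun z _ => ((hasDerivEE z).differentiableAt).differentiableWithinAt
  · intro z hz
    rw [interior_Icc] at hz
    rw [(hasDerivEE z).deriv]
    exact EE_deriv_nonneg (le_of_lt hz.1) (le_of_lt hz.2)

lemma EE_anti : AntitoneOn EE (Set.Ici z₀) := by
  apply antitoneOn_of_deriv_nonpos (convex_Ici _)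
  · exact fun z _ => ((hasDerivEE z).continuousAt).continuousWithinAt
  · exact fun z _ => ((hasDerivEE z).differentiableAt).differentiableWithinAt
  · intro z hz
    rw [interior_Ici] at hz
    rw [(hasDerivEE z).deriv]
    exact EE_deriv_nonpos (le_of_lt hz)

lemma EE_nonneg {z : ℝ} (h0 : 0 ≤ z) (h1 : z ≤ z₀) : 0 ≤ EE z := by
  have := EE_mono (Set.mem_Icc.2 ⟨le_refl 0, le_of_lt z₀_pos⟩) (Set.mem_Icc.2 ⟨h0, h1⟩) h0
  rwa [EE_zero] at this

noncomputable def DD (z : ℝ) : ℝ := (4 / π) * (G z) ^ 2 - (1 - Real.exp (-z ^ 2))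

lemma hasDerivDD (z : ℝ) : HasDerivAt DD (2 * Real.exp (-z ^ 2) * EE z) z := by
  have h1 : HasDerivAt (fun z => (G z) ^ 2) (2 * G z * Real.exp (-z ^ 2)) z := by
    exact ((hasDerivG z).pow 2).congr_deriv (by simp)
  have h2 : HasDerivAt (fun z : ℝ => Real.exp (-z ^ 2)) (Real.exp (-z ^ 2) * (-(2 * z))) z := by
    have hinner : HasDerivAt (fun z : ℝ => -z ^ 2) (-(2 * z)) z := by
      exact ((hasDerivAt_id z).pow 2).neg.congr_deriv (by simp)
    exact (Real.hasDerivAt_exp _).comp z hinner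
  have := ((h1.const_mul (4 / π)).sub ((hasDerivAt_const z (1:ℝ)).sub h2))
  refine this.congr_deriv ?_
  unfold EE
  ring

lemma DD_zero : DD 0 = 0 := by simp [DD, G_zero]

lemma tendstoDD : Tendsto DD atTop (nhds 0) := by
  have hπ : 0 < π := Real.pi_pos
  have h1 : Tendsto (fun z => (4 / π) * (G z) ^ 2) atTop (nhds ((4 / π) * (Real.sqrt π / 2) ^ 2)) :=
    ((tendstoG.pow 2).const_mul _)
  have h2 : Tendsto (fun z : ℝ => Real.exp (-z ^ 2)) atTop (nhds 0) := by
    apply Real.tendsto_exp_atBot.comp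
    have : Tendsto (fun z : ℝ => z ^ 2) atTop atTop := tendsto_pow_atTop (by norm_num)
    exact tendsto_neg_atBot_iff.mpr this
  have h3 : ((4 / π) * (Real.sqrt π / 2) ^ 2) = 1 := by
    rw [div_pow, Real.sq_sqrt hπ.le]
    rw [show ((2:ℝ)^2) = 4 by norm_num]
    field_simp
  have := h1.sub ((tendsto_const_nhds (x := (1:ℝ))).sub h2)
  unfold DD
  simpa [DD, h3] using this

lemma DD_nonneg {z : ℝ} (hz : 0 ≤ z) : 0 ≤ DD z := by
  rcases le_or_gt 0 (EE z) with hE | hE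
  · -- D monotone on [0, z]
    have hmono : MonotoneOn DD (Set.Icc 0 z) := by
      apply monotoneOn_of_deriv_nonneg (convex_Icc _ _)
      · exact fun y _ => ((hasDerivDD y).continuousAt).continuousWithinAt
      · exact fun y _ => ((hasDerivDD y).differentiableAt).differentiableWithinAt
      · intro y hy
        rw [interior_Icc] at hy
        rw [(hasDerivDD y).deriv]
        have hEy : 0 ≤ EE y := by
          rcases le_or_gt y z₀ with h | h
          · exact EE_nonneg (le_of_lt hy.1) h
          · have := EE_anti (Set.mem_Ici.2 (le_of_lt h)) (Set.mem_Ici.2 (by linarith [hy.2])) hy.2.le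
            linarith
        positivity
    have := hmono (Set.mem_Icc.2 ⟨le_refl 0, hz⟩) (Set.mem_Icc.2 ⟨hz, le_refl z⟩) hz
    rwa [DD_zero] at this
  · -- z > z₀ and D antitone on [z, ∞), tends to 0
    have hzgt : z₀ < z := by
      by_contra h
      push_neg at h
      exact absurd (EE_nonneg hz h) (not_le.2 hE)
    have hanti : AntitoneOn DD (Set.Ici z) := by
      apply antitoneOn_of_deriv_nonpos (convex_Ici _)
      · exact fun y _ => ((hasDerivDD y).continuousAt).continuousWithinAt
      · exact fun y _ => ((hasDerivDD y).differentiableAt).differentiableWithinAt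
      · intro y hy
        rw [interior_Ici] at hy
        rw [(hasDerivDD y).deriv]
        have hEy : EE y ≤ EE z := EE_anti (Set.mem_Ici.2 hzgt.le)
          (Set.mem_Ici.2 (by linarith [Set.mem_Ioi.1 hy])) (le_of_lt hy)
        have : EE y < 0 := lt_of_le_of_lt hEy hE
        nlinarith [Real.exp_pos (-y ^ 2)]
    refine le_of_tendsto tendstoDD ?_
    filter_upwards [eventually_ge_atTop z] with y hy
    exact hanti (Set.mem_Ici.2 (le_refl z)) (Set.mem_Ici.2 hy) hy

end ErfAux

lemma erf_eq (z : ℝ) : erf z = (2 / Real.sqrt π) * G z := rfl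

lemma erf_nonneg {z : ℝ} (hz : 0 ≤ z) : 0 ≤ erf z := by
  rw [erf_eq]
  have hG : 0 ≤ G z := intervalIntegral.integral_nonneg hz (fun t _ => (Real.exp_pos _).le)
  have : (0:ℝ) ≤ 2 / Real.sqrt π := by positivity
  positivity

lemma erf_sq (z : ℝ) : (erf z) ^ 2 = (4 / π) * (G z) ^ 2 := by
  rw [erf_eq, mul_pow, div_pow, Real.sq_sqrt Real.pi_pos.le]
  norm_num

lemma erf_ge {z : ℝ} (hz : 0 ≤ z) : Real.sqrt (1 - Real.exp (-z ^ 2)) ≤ erf z := by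
  have h := DD_nonneg hz
  unfold DD at h
  have h2 : 1 - Real.exp (-z ^ 2) ≤ (erf z) ^ 2 := by rw [erf_sq]; linarith
  calc Real.sqrt (1 - Real.exp (-z ^ 2)) ≤ Real.sqrt ((erf z) ^ 2) := Real.sqrt_le_sqrt h2
    _ = erf z := Real.sqrt_sq (erf_nonneg hz)

lemma erf_cont : Continuous erf := by
  have : erf = fun z => (2 / Real.sqrt π) * G z := rfl
  rw [this]
  exact continuous_const.mul contG

noncomputable def kk (u : ℝ) : ℝ :=
  u ^ 2 * Real.exp (3 * u ^ 2 / 4) / Real.sqrt (Real.exp (u ^ 2 / 2) - 1)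

noncomputable def BB (x : ℝ) : ℝ :=
  x * Real.exp (x ^ 2 / 4) * Real.sqrt (Real.exp (x ^ 2 / 2) - 1)

lemma exp_sub_one_ge (u : ℝ) : u ^ 2 / 2 ≤ Real.exp (u ^ 2 / 2) - 1 := by
  linarith [Real.add_one_le_exp (u ^ 2 / 2)]

lemma sqrt_lower (u : ℝ) : |u| / Real.sqrt 2 ≤ Real.sqrt (Real.exp (u ^ 2 / 2) - 1) := by
  have h1 : Real.sqrt (u ^ 2 / 2) ≤ Real.sqrt (Real.exp (u ^ 2 / 2) - 1) :=
    Real.sqrt_le_sqrt (exp_sub_one_ge u)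
  rwa [Real.sqrt_div' (u ^ 2) (by norm_num), Real.sqrt_sq_eq_abs] at h1

lemma kk_nonneg (u : ℝ) : 0 ≤ kk u := by unfold kk; positivity

lemma exp_sub_one_pos {u : ℝ} (hu : u ≠ 0) : 0 < Real.exp (u ^ 2 / 2) - 1 := by
  have : 0 < u ^ 2 / 2 := by positivity
  linarith [exp_sub_one_ge u]

lemma sqrt_pos_of_ne {u : ℝ} (hu : u ≠ 0) : 0 < Real.sqrt (Real.exp (u ^ 2 / 2) - 1) :=
  Real.sqrt_pos.2 (exp_sub_one_pos hu)

lemma kk_le (u : ℝ) : kk u ≤ Real.sqrt 2 * |u| * Real.exp (3 * u ^ 2 / 4) := by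
  rcases eq_or_ne u 0 with rfl | hu
  · simp [kk]
  · have hs := sqrt_pos_of_ne hu
    rw [kk, div_le_iff₀ hs]
    have hlow := sqrt_lower u
    have hc : (0:ℝ) < Real.sqrt 2 := by positivity
    have hc2 : Real.sqrt 2 * Real.sqrt 2 = 2 := Real.mul_self_sqrt (by norm_num)
    have he : (0:ℝ) < Real.exp (3 * u ^ 2 / 4) := Real.exp_pos _
    have habs : |u| * |u| = u ^ 2 := by rw [← abs_mul, abs_mul_self]; ring
    have h2 : |u| ≤ Real.sqrt 2 * Real.sqrt (Real.exp (u ^ 2 / 2) - 1) := by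
      rw [div_le_iff₀ hc] at hlow
      linarith [hlow]
    nlinarith [mul_le_mul_of_nonneg_left h2 (mul_nonneg (abs_nonneg u) he.le)]

lemma kk_cont : Continuous kk := by
  rw [continuous_iff_continuousAt]
  intro u
  rcases eq_or_ne u 0 with rfl | hu
  · have h0 : kk 0 = 0 := by simp [kk]
    rw [ContinuousAt, h0]
    apply squeeze_zero kk_nonneg kk_le
    have hcont : Continuous fun u : ℝ => Real.sqrt 2 * |u| * Real.exp (3 * u ^ 2 / 4) := by
      continuity
    have := hcont.tendsto 0
    simpa using this
  · apply ContinuousAt.div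
    · fun_prop
    · exact (Real.continuous_sqrt.comp (by continuity)).continuousAt
    · exact (sqrt_pos_of_ne hu).ne'

noncomputable def KK (x : ℝ) : ℝ := ∫ u in (0:ℝ)..x, kk u

lemma KK_cont : Continuous KK :=
  intervalIntegral.continuous_primitive (fun a b => kk_cont.intervalIntegrable a b) 0

lemma hasDerivKK (x : ℝ) : HasDerivAt KK (kk x) x :=
  intervalIntegral.integral_hasDerivAt_right (kk_cont.intervalIntegrable 0 x)
    (kk_cont.stronglyMeasurable.stronglyMeasurableAtFilter) kk_cont.continuousAt

lemma hasDerivBB {x : ℝ} (hx : x ≠ 0) :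
    HasDerivAt BB (Real.exp (x ^ 2 / 4) * (1 + x ^ 2 / 2) * Real.sqrt (Real.exp (x ^ 2 / 2) - 1)
      + x * Real.exp (x ^ 2 / 4) *
        (x * Real.exp (x ^ 2 / 2) / (2 * Real.sqrt (Real.exp (x ^ 2 / 2) - 1)))) x := by
  have hsq : HasDerivAt (fun x : ℝ => x ^ 2 / 4) (x / 2) x := by
    have := ((hasDerivAt_id x).pow 2).div_const 4
    refine this.congr_deriv ?_
    simp [id]; try ring
  have hexp4 : HasDerivAt (fun x : ℝ => Real.exp (x ^ 2 / 4)) (Real.exp (x ^ 2 / 4) * (x / 2)) x :=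
    (Real.hasDerivAt_exp _).comp x hsq
  have h1 : HasDerivAt (fun x : ℝ => x * Real.exp (x ^ 2 / 4))
      (Real.exp (x ^ 2 / 4) + x * (Real.exp (x ^ 2 / 4) * (x / 2))) x := by
    exact ((hasDerivAt_id x).mul hexp4).congr_deriv (by simp)
  have hsq2 : HasDerivAt (fun x : ℝ => x ^ 2 / 2) x x := by
    have := ((hasDerivAt_id x).pow 2).div_const 2
    refine this.congr_deriv ?_
    simp [id]; try ring
  have hinner : HasDerivAt (fun x : ℝ => Real.exp (x ^ 2 / 2) - 1)
      (x * Real.exp (x ^ 2 / 2)) x := by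
    have := ((Real.hasDerivAt_exp (x ^ 2 / 2)).comp x hsq2).sub_const 1
    simpa [mul_comm] using this
  have h2 : HasDerivAt (fun x : ℝ => Real.sqrt (Real.exp (x ^ 2 / 2) - 1))
      (x * Real.exp (x ^ 2 / 2) / (2 * Real.sqrt (Real.exp (x ^ 2 / 2) - 1))) x :=
    hinner.sqrt (exp_sub_one_pos hx).ne'
  have := h1.mul h2
  refine this.congr_deriv ?_
  ring

lemma BB_cont : Continuous BB := by
  unfold BB
  exact (continuous_id.mul (Real.continuous_exp.comp (by continuity))).mul
    (Real.continuous_sqrt.comp (by continuity))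

lemma deriv_ineq {x : ℝ} (hx : 0 < x) :
    kk x ≤ Real.exp (x ^ 2 / 4) * (1 + x ^ 2 / 2) * Real.sqrt (Real.exp (x ^ 2 / 2) - 1)
      + x * Real.exp (x ^ 2 / 4) *
        (x * Real.exp (x ^ 2 / 2) / (2 * Real.sqrt (Real.exp (x ^ 2 / 2) - 1))) := by
  set s := Real.sqrt (Real.exp (x ^ 2 / 2) - 1) with hs_def
  have hs : 0 < s := sqrt_pos_of_ne hx.ne'
  have hs2 : s ^ 2 = Real.exp (x ^ 2 / 2) - 1 := Real.sq_sqrt (exp_sub_one_pos hx.ne').le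
  have hE4 : 0 < Real.exp (x ^ 2 / 4) := Real.exp_pos _
  have hE2 : 0 < Real.exp (x ^ 2 / 2) := Real.exp_pos _
  have hexp34 : Real.exp (3 * x ^ 2 / 4) = Real.exp (x ^ 2 / 4) * Real.exp (x ^ 2 / 2) := by
    rw [← Real.exp_add]; ring_nf
  have key : x ^ 2 * Real.exp (x ^ 2 / 2) / 2 ≤ (1 + x ^ 2 / 2) * s ^ 2 := by
    rw [hs2]
    nlinarith [Real.add_one_le_exp (x ^ 2 / 2)]
  rw [kk, hexp34]
  rw [div_le_iff₀ hs]
  have expand : (Real.exp (x ^ 2 / 4) * (1 + x ^ 2 / 2) * s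
      + x * Real.exp (x ^ 2 / 4) * (x * Real.exp (x ^ 2 / 2) / (2 * s))) * s
      = Real.exp (x ^ 2 / 4) * ((1 + x ^ 2 / 2) * s ^ 2 + x ^ 2 * Real.exp (x ^ 2 / 2) / 2) := by
    field_simp
  rw [expand]
  nlinarith [key, mul_le_mul_of_nonneg_left key hE4.le]

lemma KK_le_BB {x : ℝ} (hx : 0 ≤ x) : KK x ≤ BB x := by
  have hmono : MonotoneOn (fun y => BB y - KK y) (Set.Ici 0) := by
    apply monotoneOn_of_deriv_nonneg (convex_Ici _)
    · exact (BB_cont.sub KK_cont).continuousOn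
    · intro y hy
      rw [interior_Ici] at hy
      exact ((hasDerivBB (ne_of_gt hy)).sub (hasDerivKK y)).differentiableAt.differentiableWithinAt
    · intro y hy
      rw [interior_Ici] at hy
      rw [show deriv (fun y => BB y - KK y) y = _ from ((hasDerivBB (ne_of_gt hy)).sub (hasDerivKK y)).deriv]
      have := deriv_ineq hy
      linarith
  have h0 : BB 0 - KK 0 = 0 := by
    simp [BB, KK, intervalIntegral.integral_same]
  have := hmono (Set.mem_Ici.2 (le_refl 0)) (Set.mem_Ici.2 hx) hx
  simp only at this
  linarith

-- erf at u/√2 lower bound in convenient form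
lemma erf_half_ge {u : ℝ} (hu : 0 ≤ u) :
    Real.sqrt (Real.exp (u ^ 2 / 2) - 1) / Real.exp (u ^ 2 / 4) ≤ erf (u / Real.sqrt 2) := by
  have h2 : (0:ℝ) < Real.sqrt 2 := by positivity
  have hz : 0 ≤ u / Real.sqrt 2 := by positivity
  have hsq : (u / Real.sqrt 2) ^ 2 = u ^ 2 / 2 := by
    rw [div_pow, Real.sq_sqrt (by norm_num : (0:ℝ) ≤ 2)]
  have := erf_ge hz
  rw [hsq] at this
  refine le_trans (le_of_eq ?_) this
  -- √(e^t - 1)/e^{t/2-ish} = √(1 - e^{-t})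
  have hE2 : (0:ℝ) < Real.exp (u ^ 2 / 2) := Real.exp_pos _
  have hE4 : (0:ℝ) < Real.exp (u ^ 2 / 4) := Real.exp_pos _
  have hsq2 : Real.exp (u ^ 2 / 4) * Real.exp (u ^ 2 / 4) = Real.exp (u ^ 2 / 2) := by
    rw [← Real.exp_add]; ring_nf
  have hsqrtE : Real.sqrt (Real.exp (u ^ 2 / 2)) = Real.exp (u ^ 2 / 4) := by
    rw [← hsq2, Real.sqrt_mul_self hE4.le]
  have hnum : (0:ℝ) ≤ Real.exp (u ^ 2 / 2) - 1 := by
    have : (1:ℝ) ≤ Real.exp (u ^ 2 / 2) := Real.one_le_exp (by positivity)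
    linarith
  have harg : 1 - Real.exp (-(u ^ 2 / 2)) = (Real.exp (u ^ 2 / 2) - 1) / Real.exp (u ^ 2 / 2) := by
    rw [Real.exp_neg]
    field_simp
  rw [harg, Real.sqrt_div hnum, hsqrtE]

lemma erf_half_pos {u : ℝ} (hu : 0 < u) : 0 < erf (u / Real.sqrt 2) := by
  refine lt_of_lt_of_le ?_ (erf_half_ge hu.le)
  have := sqrt_pos_of_ne hu.ne'
  positivity

lemma ftc_lemma (x : ℝ) :
    ∫ u in (0:ℝ)..x, u * Real.exp (u ^ 2 / 2) = Real.exp (x ^ 2 / 2) - 1 := by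
  have hderiv : ∀ u ∈ Set.uIcc (0:ℝ) x,
      HasDerivAt (fun v : ℝ => Real.exp (v ^ 2 / 2)) (u * Real.exp (u ^ 2 / 2)) u := by
    intro u _
    have hsq2 : HasDerivAt (fun v : ℝ => v ^ 2 / 2) u u := by
      have := ((hasDerivAt_id u).pow 2).div_const 2
      refine this.congr_deriv ?_
      simp [id]; try ring
    have := (Real.hasDerivAt_exp (u ^ 2 / 2)).comp u hsq2
    exact this.congr_deriv (by ring)
  have hint : IntervalIntegrable (fun u : ℝ => u * Real.exp (u ^ 2 / 2)) volume 0 x :=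
    (continuous_id.mul (Real.continuous_exp.comp (by continuity))).intervalIntegrable 0 x
  have := intervalIntegral.integral_eq_sub_of_hasDerivAt hderiv hint
  simpa using this

/-- **Lower bound on `I`** (Lemma 13): `I x ≥ ℓ x` for `x ≥ 0`, where
`ℓ x = √((e^{x²/2} - 1)³/(x² e^{x²/2}))` (which evaluates to `0` at `x = 0`). -/
theorem I_ge_ell (x : ℝ) (hx : 0 ≤ x) :
    Real.sqrt ((Real.exp (x ^ 2 / 2) - 1) ^ 3 / (x ^ 2 * Real.exp (x ^ 2 / 2))) ≤ I x := by
  rcases eq_or_lt_of_le hx with rfl | hxpos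
  · simp [I]
  set A := Real.exp (x ^ 2 / 2) - 1 with hA_def
  have hA : 0 < A := exp_sub_one_pos hxpos.ne'
  have hBBpos : 0 < BB x := by
    unfold BB
    have := sqrt_pos_of_ne hxpos.ne'
    positivity
  -- the two L² functions
  set f : ℝ → ℝ := fun u => Real.exp (u ^ 2 / 4) * Real.sqrt (erf (u / Real.sqrt 2)) with hf_def
  set g : ℝ → ℝ := fun u => u * Real.exp (u ^ 2 / 4) / Real.sqrt (erf (u / Real.sqrt 2))
    with hg_def
  set μ := volume.restrict (Set.Ioc (0:ℝ) x) with hμ_def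
  have hf_cont : Continuous f := by
    apply Continuous.mul
    · exact Real.continuous_exp.comp (by continuity)
    · exact Real.continuous_sqrt.comp (erf_cont.comp (by continuity))
  have hg_meas' : Measurable g := by
    apply Measurable.div
    · exact (continuous_id.mul (Real.continuous_exp.comp (by continuity))).measurable
    · exact (Real.continuous_sqrt.comp (erf_cont.comp (by continuity))).measurable
  have hg_meas : AEStronglyMeasurable g μ := hg_meas'.aestronglyMeasurable
  -- f² integrable
  have hf_sq_int : Integrable (fun u => f u ^ 2) μ := by
    exact ((hf_cont.mul hf_cont).integrableOn_Ioc).congr_fun (fun u _ => by rw [Pi.mul_apply]; ring) measurableSet_Ioc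
  -- g² ≤ kk on Ioc
  have hg_sq_le : ∀ u ∈ Set.Ioc (0:ℝ) x, g u ^ 2 ≤ kk u := by
    intro u hu
    have hu0 : 0 < u := hu.1
    have herf : 0 < erf (u / Real.sqrt 2) := erf_half_pos hu0
    have hge := erf_half_ge hu0.le
    have hE4 : (0:ℝ) < Real.exp (u ^ 2 / 4) := Real.exp_pos _
    have hs : 0 < Real.sqrt (Real.exp (u ^ 2 / 2) - 1) := sqrt_pos_of_ne hu0.ne'
    have hlow : 0 < Real.sqrt (Real.exp (u ^ 2 / 2) - 1) / Real.exp (u ^ 2 / 4) := by positivity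
    have hg_eq : g u ^ 2 = u ^ 2 * Real.exp (u ^ 2 / 2) / erf (u / Real.sqrt 2) := by
      rw [hg_def]
      rw [div_pow, mul_pow, Real.sq_sqrt herf.le]
      congr 2
      rw [sq, ← Real.exp_add]; ring_nf
    rw [hg_eq]
    have h1 : u ^ 2 * Real.exp (u ^ 2 / 2) / erf (u / Real.sqrt 2)
        ≤ u ^ 2 * Real.exp (u ^ 2 / 2)
          / (Real.sqrt (Real.exp (u ^ 2 / 2) - 1) / Real.exp (u ^ 2 / 4)) := by
      apply div_le_div_of_nonneg_left (by positivity) hlow hge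
    refine le_trans h1 (le_of_eq ?_)
    rw [kk, div_div_eq_mul_div]
    congr 1
    rw [show Real.exp (3 * u ^ 2 / 4) = Real.exp (u ^ 2 / 2) * Real.exp (u ^ 2 / 4) by
      rw [← Real.exp_add]; ring_nf]
    ring
  have hg_sq_nonneg : ∀ u, 0 ≤ g u ^ 2 := fun u => sq_nonneg _
  have hkk_int : IntegrableOn kk (Set.Ioc 0 x) := kk_cont.integrableOn_Ioc
  have hg_sq_meas : AEStronglyMeasurable (fun u => g u ^ 2) μ :=
    ((hg_meas'.pow_const 2)).aestronglyMeasurable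
  have hg_sq_int : Integrable (fun u => g u ^ 2) μ := by
    apply Integrable.mono' hkk_int hg_sq_meas
    rw [ae_restrict_iff' measurableSet_Ioc]
    filter_upwards with u hu
    rw [Real.norm_of_nonneg (sq_nonneg _)]
    exact hg_sq_le u hu
  -- Memℒp
  have hEN2 : (ENNReal.ofReal 2) = 2 := by norm_num
  have hf_mem : MemLp f (ENNReal.ofReal 2) μ := by
    rw [hEN2, memLp_two_iff_integrable_sq hf_cont.aestronglyMeasurable]
    exact hf_sq_int
  have hg_mem : MemLp g (ENNReal.ofReal 2) μ := by
    rw [hEN2, memLp_two_iff_integrable_sq hg_meas]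
    exact hg_sq_int
  -- Cauchy–Schwarz
  have hconj : Real.HolderConjugate 2 2 := Real.holderConjugate_iff.mpr ⟨by norm_num, by norm_num⟩
  have hf_nonneg : 0 ≤ᵐ[μ] f := by
    filter_upwards with u
    rw [hf_def]
    positivity
  have hg_nonneg : 0 ≤ᵐ[μ] g := by
    rw [Filter.EventuallyLE, ae_restrict_iff' measurableSet_Ioc]
    filter_upwards with u hu
    rw [hg_def]
    have := hu.1
    positivity
  have hCS := MeasureTheory.integral_mul_le_Lp_mul_Lq_of_nonneg hconj hf_nonneg hg_nonneg
    hf_mem hg_mem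
  -- rewrite rpow 2 as pow 2
  simp_rw [show (2:ℝ) = ((2:ℕ):ℝ) by norm_num, Real.rpow_natCast] at hCS
  -- value of ∫ f * g
  have hfg : ∫ a, f a * g a ∂μ = A := by
    have h1 : ∫ a, f a * g a ∂μ = ∫ u in Set.Ioc (0:ℝ) x, u * Real.exp (u ^ 2 / 2) := by
      apply setIntegral_congr_fun measurableSet_Ioc
      intro u hu
      have herf : 0 < erf (u / Real.sqrt 2) := erf_half_pos hu.1
      have hsne : Real.sqrt (erf (u / Real.sqrt 2)) ≠ 0 := by positivity
      simp only [hf_def, hg_def]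
      field_simp
      rw [show Real.exp (u ^ 2 / 2) = Real.exp (u ^ 2 / 4) * Real.exp (u ^ 2 / 4) by
        rw [← Real.exp_add]; ring_nf]
      ring
    rw [h1, ← intervalIntegral.integral_of_le hx, ftc_lemma]
  -- value of ∫ f ^ 2
  have hIf : ∫ a, f a ^ 2 ∂μ = I x := by
    have h1 : ∫ a, f a ^ 2 ∂μ
        = ∫ u in Set.Ioc (0:ℝ) x, Real.exp (u ^ 2 / 2) * erf (u / Real.sqrt 2) := by
      apply setIntegral_congr_fun measurableSet_Ioc
      intro u hu
      have herf : 0 ≤ erf (u / Real.sqrt 2) := (erf_half_pos hu.1).le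
      simp only [hf_def]
      rw [mul_pow, Real.sq_sqrt herf]
      congr 2
      rw [sq, ← Real.exp_add]; ring_nf
    rw [h1, ← intervalIntegral.integral_of_le hx]
    rfl
  -- bound on ∫ g ^ 2
  have hg2 : ∫ a, g a ^ 2 ∂μ ≤ BB x := by
    have h1 : ∫ a, g a ^ 2 ∂μ ≤ ∫ u in Set.Ioc (0:ℝ) x, kk u :=
      setIntegral_mono_on hg_sq_int hkk_int measurableSet_Ioc hg_sq_le
    have h2 : ∫ u in Set.Ioc (0:ℝ) x, kk u = KK x :=
      (intervalIntegral.integral_of_le hx).symm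
    calc ∫ a, g a ^ 2 ∂μ ≤ KK x := h2 ▸ h1
      _ ≤ BB x := KK_le_BB hx
  have hI_nonneg : 0 ≤ I x := by
    rw [← hIf]
    exact integral_nonneg fun u => sq_nonneg _
  have hg2_nonneg : 0 ≤ ∫ a, g a ^ 2 ∂μ := integral_nonneg fun u => sq_nonneg _
  -- conclude A ≤ √(I x) * √(BB x)
  rw [hfg, hIf] at hCS
  rw [show (1 / ((2:ℕ):ℝ)) = (1/2 : ℝ) by norm_num] at hCS
  rw [← Real.sqrt_eq_rpow, ← Real.sqrt_eq_rpow] at hCS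
  have hstep : A ≤ Real.sqrt (I x) * Real.sqrt (BB x) := by
    refine le_trans hCS ?_
    exact mul_le_mul_of_nonneg_left (Real.sqrt_le_sqrt hg2) (Real.sqrt_nonneg _)
  have hA2 : A ^ 2 ≤ I x * BB x := by
    have h := pow_le_pow_left₀ hA.le hstep 2
    rwa [mul_pow, Real.sq_sqrt hI_nonneg, Real.sq_sqrt hBBpos.le] at h
  -- final algebra
  have hBBsq : BB x ^ 2 = x ^ 2 * Real.exp (x ^ 2 / 2) * A := by
    rw [BB, ← hA_def, mul_pow, mul_pow, Real.sq_sqrt hA.le,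
      pow_two (Real.exp (x ^ 2 / 4)), ← Real.exp_add]
    ring_nf
  have hkey : A ^ 3 / (x ^ 2 * Real.exp (x ^ 2 / 2)) = (A ^ 2 / BB x) ^ 2 := by
    rw [div_pow, hBBsq]
    rw [div_eq_div_iff (by positivity) (by positivity)]
    ring
  rw [hkey, Real.sqrt_sq (div_nonneg (by positivity) hBBpos.le), div_le_iff₀ hBBpos]
  exact hA2
end

section
/- Define I(x) = ∫_0^x e^{u²/2} · erf(u/√2) du. Then for every real x, I(x) = √(2/π) · ∫_0^∞ [e^{(x²/2)·sech²(w)} - 1] dw. -/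
open MeasureTheory Real

open Set

lemma tanh_hasDerivAt (w : ℝ) : HasDerivAt Real.tanh (1 / Real.cosh w ^ 2) w := by
  have h := (Real.hasDerivAt_sinh w).div (Real.hasDerivAt_cosh w) (Real.cosh_pos w).ne'
  have heq : Real.tanh = fun y => Real.sinh y / Real.cosh y :=
    funext fun y => Real.tanh_eq_sinh_div_cosh y
  rw [heq]
  refine h.congr_deriv ?_
  have := Real.cosh_sq_sub_sinh_sq w
  field_simp
  nlinarith [this]

lemma tanh_strictMono : StrictMono Real.tanh := by
  apply strictMono_of_deriv_pos
  intro w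
  rw [(tanh_hasDerivAt w).deriv]
  positivity

lemma one_sub_tanh_sq (w : ℝ) : 1 - Real.tanh w ^ 2 = 1 / Real.cosh w ^ 2 := by
  have h := Real.cosh_sq_sub_sinh_sq w
  have hc : Real.cosh w ≠ 0 := (Real.cosh_pos w).ne'
  rw [Real.tanh_eq_sinh_div_cosh]
  field_simp
  exact h

lemma tanh_lt_one (w : ℝ) : Real.tanh w < 1 := by
  rw [Real.tanh_eq_sinh_div_cosh, div_lt_one (Real.cosh_pos w)]
  have h1 : 0 < Real.exp (-w) := Real.exp_pos _
  rw [Real.sinh_eq, Real.cosh_eq]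
  linarith

lemma tanh_image : Real.tanh '' Ioi 0 = Ioo 0 1 := by
  ext s
  constructor
  · rintro ⟨w, hw, rfl⟩
    refine ⟨?_, _root_.tanh_lt_one w⟩
    have := tanh_strictMono hw
    simpa [Real.tanh_zero] using this
  · rintro ⟨hs0, hs1⟩
    refine ⟨Real.log ((1 + s) / (1 - s)) / 2, ?_, ?_⟩
    · have h1 : (1 : ℝ) < (1 + s) / (1 - s) := by
        rw [lt_div_iff₀ (by linarith)]; linarith
      have := Real.log_pos h1
      simpa using by positivity
    · set w := Real.log ((1 + s) / (1 - s)) / 2 with hw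
      have hr : (0:ℝ) < (1 + s) / (1 - s) := div_pos (by linarith) (by linarith)
      have he : Real.exp w * Real.exp w = (1 + s) / (1 - s) := by
        rw [← Real.exp_add, show w + w = Real.log ((1+s)/(1-s)) by rw [hw]; ring,
          Real.exp_log hr]
      have hew : (0:ℝ) < Real.exp w := Real.exp_pos w
      rw [Real.tanh_eq_sinh_div_cosh, Real.sinh_eq, Real.cosh_eq, Real.exp_neg]
      rw [div_eq_iff (by positivity)]
      have h2 : Real.exp w * Real.exp w * (1 - s) = 1 + s := by
        rw [he, div_mul_cancel₀ _ (by linarith : (1:ℝ) - s ≠ 0)]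
      field_simp
      nlinarith [h2]

lemma subst_tanh (h : ℝ → ℝ) :
    (∫ w in Ioi (0:ℝ), (1 / Real.cosh w ^ 2) * h (Real.tanh w)) = ∫ s in Ioo (0:ℝ) 1, h s := by
  rw [← tanh_image,
    integral_image_eq_integral_abs_deriv_smul measurableSet_Ioi
      (fun w _ => (tanh_hasDerivAt w).hasDerivWithinAt) (tanh_strictMono.injective.injOn) h]
  refine setIntegral_congr_fun measurableSet_Ioi fun w _ => ?_
  rw [smul_eq_mul, abs_of_pos (by positivity : (0:ℝ) < 1 / Real.cosh w ^ 2)]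

lemma stepA (c x : ℝ) :
    Real.exp (x ^ 2 / 2 * c) - 1 = c * ∫ u in (0:ℝ)..x, u * Real.exp (u ^ 2 / 2 * c) := by
  have hd : ∀ u : ℝ, HasDerivAt (fun v : ℝ => Real.exp (v ^ 2 / 2 * c))
      (c * u * Real.exp (u ^ 2 / 2 * c)) u := by
    intro u
    have h1 : HasDerivAt (fun v : ℝ => v ^ 2 / 2 * c) (c * u) u := by
      have h2 := ((hasDerivAt_pow 2 u).div_const 2).mul_const c
      refine h2.congr_deriv ?_
      simp
      ring
    have h3 := h1.exp
    convert h3 using 1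
    ring
  have := intervalIntegral.integral_eq_sub_of_hasDerivAt (f := fun v : ℝ => Real.exp (v ^ 2 / 2 * c))
    (a := 0) (b := x) (fun u _ => hd u)
    ((Continuous.intervalIntegrable (by continuity) _ _))
  rw [← intervalIntegral.integral_const_mul]
  simp only [mul_assoc] at this ⊢
  rw [this]
  norm_num

lemma erf_eq_s15 (u : ℝ) :
    erf (u / Real.sqrt 2) = Real.sqrt (2 / π) * ∫ t in (0:ℝ)..u, Real.exp (-(t ^ 2 / 2)) := by
  have h2 : Real.sqrt 2 * Real.sqrt 2 = 2 := Real.mul_self_sqrt (by norm_num)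
  have hs2 : (0:ℝ) < Real.sqrt 2 := by positivity
  have hπ : (0:ℝ) < Real.sqrt π := Real.sqrt_pos.mpr Real.pi_pos
  have hc : 2 / Real.sqrt π * (Real.sqrt 2)⁻¹ = Real.sqrt (2 / π) := by
    rw [Real.sqrt_div (by norm_num : (0:ℝ) ≤ 2)]
    field_simp
    nlinarith [h2]
  have key := intervalIntegral.smul_integral_comp_mul_left
    (f := fun t : ℝ => Real.exp (-t ^ 2)) (a := (0:ℝ)) (b := u) (Real.sqrt 2)⁻¹
  rw [mul_zero] at key
  have e1 : (∫ t in (0:ℝ)..u, Real.exp (-((Real.sqrt 2)⁻¹ * t) ^ 2))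
      = ∫ t in (0:ℝ)..u, Real.exp (-(t ^ 2 / 2)) := by
    refine intervalIntegral.integral_congr fun t _ => ?_
    rw [mul_pow, inv_pow, Real.sq_sqrt (by norm_num : (0:ℝ) ≤ 2)]
    ring_nf
  unfold erf
  rw [show u / Real.sqrt 2 = (Real.sqrt 2)⁻¹ * u by field_simp, ← key, smul_eq_mul, e1,
    ← mul_assoc, hc]

lemma inner_eq (u : ℝ) :
    (∫ s in (0:ℝ)..1, u * Real.exp (u ^ 2 / 2 * (1 - s ^ 2)))
      = Real.exp (u ^ 2 / 2) * ∫ t in (0:ℝ)..u, Real.exp (-(t ^ 2 / 2)) := by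
  have key := intervalIntegral.smul_integral_comp_mul_left
    (f := fun t : ℝ => Real.exp (-(t ^ 2 / 2))) (a := (0:ℝ)) (b := 1) u
  rw [mul_zero, mul_one] at key
  rw [← key, smul_eq_mul, ← intervalIntegral.integral_const_mul,
    ← intervalIntegral.integral_const_mul]
  refine intervalIntegral.integral_congr fun s _ => ?_
  have h : u ^ 2 / 2 * (1 - s ^ 2) = u ^ 2 / 2 + -((u * s) ^ 2 / 2) := by ring
  rw [h, Real.exp_add]
  ring

lemma fubini_step {x : ℝ} :
    (∫ s in Ioc (0:ℝ) 1, ∫ u in Ioc (0:ℝ) x, u * Real.exp (u ^ 2 / 2 * (1 - s ^ 2)))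
      = ∫ u in Ioc (0:ℝ) x, ∫ s in Ioc (0:ℝ) 1, u * Real.exp (u ^ 2 / 2 * (1 - s ^ 2)) := by
  apply MeasureTheory.integral_integral_swap
  have hcont : Continuous fun p : ℝ × ℝ => p.2 * Real.exp (p.2 ^ 2 / 2 * (1 - p.1 ^ 2)) := by
    continuity
  have h1 : IntegrableOn (fun p : ℝ × ℝ => p.2 * Real.exp (p.2 ^ 2 / 2 * (1 - p.1 ^ 2)))
      (Icc (0:ℝ) 1 ×ˢ Icc (0:ℝ) x) := hcont.continuousOn.integrableOn_compact
        (isCompact_Icc.prod isCompact_Icc)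
  have h2 := h1.mono_set (Set.prod_mono Ioc_subset_Icc_self Ioc_subset_Icc_self)
  rw [Measure.prod_restrict, ← Measure.volume_eq_prod]
  exact h2

lemma key_nonneg (x : ℝ) (hx : 0 ≤ x) :
    I x = Real.sqrt (2 / π) *
      ∫ w in Set.Ioi (0 : ℝ), (Real.exp ((x ^ 2 / 2) * (1 / Real.cosh w) ^ 2) - 1) := by
  have hL : I x = Real.sqrt (2 / π) *
      ∫ u in (0:ℝ)..x, Real.exp (u ^ 2 / 2) * ∫ t in (0:ℝ)..u, Real.exp (-(t ^ 2 / 2)) := by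
    unfold I
    rw [← intervalIntegral.integral_const_mul]
    refine intervalIntegral.integral_congr fun u _ => ?_
    rw [erf_eq_s15 u]; ring
  rw [hL]
  congr 1
  have h1 : ∀ w : ℝ, Real.exp (x ^ 2 / 2 * (1 / Real.cosh w) ^ 2) - 1
      = (1 / Real.cosh w ^ 2) *
        ∫ u in (0:ℝ)..x, u * Real.exp (u ^ 2 / 2 * (1 - Real.tanh w ^ 2)) := by
    intro w
    have e : (1 / Real.cosh w) ^ 2 = 1 / Real.cosh w ^ 2 := by
      rw [div_pow, one_pow]
    rw [e, ← one_sub_tanh_sq w, stepA (1 - Real.tanh w ^ 2) x]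
  calc (∫ u in (0:ℝ)..x, Real.exp (u ^ 2 / 2) * ∫ t in (0:ℝ)..u, Real.exp (-(t ^ 2 / 2)))
      = ∫ u in Ioc (0:ℝ) x, Real.exp (u ^ 2 / 2) * ∫ t in (0:ℝ)..u, Real.exp (-(t ^ 2 / 2)) :=
        intervalIntegral.integral_of_le hx
    _ = ∫ u in Ioc (0:ℝ) x, ∫ s in Ioc (0:ℝ) 1, u * Real.exp (u ^ 2 / 2 * (1 - s ^ 2)) := by
        refine setIntegral_congr_fun measurableSet_Ioc fun u _ => ?_
        rw [← intervalIntegral.integral_of_le (zero_le_one' ℝ), inner_eq u]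
    _ = ∫ s in Ioc (0:ℝ) 1, ∫ u in Ioc (0:ℝ) x, u * Real.exp (u ^ 2 / 2 * (1 - s ^ 2)) :=
        fubini_step.symm
    _ = ∫ s in Ioo (0:ℝ) 1, ∫ u in Ioc (0:ℝ) x, u * Real.exp (u ^ 2 / 2 * (1 - s ^ 2)) :=
        MeasureTheory.integral_Ioc_eq_integral_Ioo
    _ = ∫ w in Ioi (0:ℝ), (1 / Real.cosh w ^ 2) *
          ∫ u in Ioc (0:ℝ) x, u * Real.exp (u ^ 2 / 2 * (1 - Real.tanh w ^ 2)) :=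
        (subst_tanh fun s => ∫ u in Ioc (0:ℝ) x, u * Real.exp (u ^ 2 / 2 * (1 - s ^ 2))).symm
    _ = ∫ w in Ioi (0:ℝ), (Real.exp (x ^ 2 / 2 * (1 / Real.cosh w) ^ 2) - 1) := by
        refine setIntegral_congr_fun measurableSet_Ioi fun w _ => ?_
        rw [h1 w, intervalIntegral.integral_of_le hx]

lemma erf_neg (z : ℝ) : erf (-z) = - erf z := by
  unfold erf
  have h := intervalIntegral.integral_comp_neg (a := (0:ℝ)) (b := -z)
    (f := fun t => Real.exp (-t ^ 2))
  simp only [neg_neg, neg_zero, neg_sq] at h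
  rw [h, intervalIntegral.integral_symm]
  ring

lemma I_neg (x : ℝ) : I (-x) = I x := by
  unfold I
  have h := intervalIntegral.integral_comp_neg (a := (0:ℝ)) (b := -x)
    (f := fun u => Real.exp (u ^ 2 / 2) * erf (u / Real.sqrt 2))
  have h2 : (∫ u in (0:ℝ)..(-x), Real.exp ((-u) ^ 2 / 2) * erf (-u / Real.sqrt 2))
      = -∫ u in (0:ℝ)..(-x), Real.exp (u ^ 2 / 2) * erf (u / Real.sqrt 2) := by
    rw [← intervalIntegral.integral_neg]
    refine intervalIntegral.integral_congr fun u _ => ?_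
    rw [neg_div, erf_neg, neg_sq]; ring
  simp only [neg_neg, neg_zero] at h
  rw [h2, intervalIntegral.integral_symm 0 x] at h
  linarith [h]

/-- **Hyperbolic-secant rewrite of `I`** (equation (13)):
`I x = √(2/π) ∫_0^∞ [e^{(x²/2) sech²(w)} - 1] dw`. -/
theorem I_sech_rewrite (x : ℝ) :
    I x = Real.sqrt (2 / π) *
      ∫ w in Set.Ioi (0 : ℝ), (Real.exp ((x ^ 2 / 2) * (1 / Real.cosh w) ^ 2) - 1) := by
  rcases le_total 0 x with hx | hx
  · exact key_nonneg x hx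
  · have h := key_nonneg (-x) (by linarith)
    rw [I_neg x, neg_sq] at h
    exact h
end
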